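/- arXiv:math/0107212 — 5 statements merged into one kernel-verified Lean document; each statement's English description precedes it below -/
import Mathlib

section
/- For every smooth function f : U → ℝ and every smooth function φ : (0,∞) → ℝ with φ′ ≠ 0 and φ″ ≠ 0 everywhere, the fiberwise spherically symmetric Lagrangian L(x,v) = φ(e^{−f(x)}·|v|) on U × (ℝⁿ∖{0}) satisfies L′ ≠ 0 and L″ ≠ 0 everywhere, and its Euler–Lagrange force field F — the unique extended covector field satisfying Σ_s ∇̃_s∇̃_k L · F^s + Σ_s ∇_s∇̃_k L · v^s − ∇_k L = 0 (with F^s = Σ_r g^{sr} F_r) — is given by F_r = −|v|²·∂f/∂x^r + 2·(Σ_s (∂f/∂x^s) v^s)·v_r. Moreover this F equals the normal-shift form F_r = −|v| Σ_s (∇_s W / W′) · (2 v^s v_r/|v|² − δ^s_r) with W(x,v) = |v|·e^{−f(x)}. -/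
open Real Set
open scoped ContDiff Topology

noncomputable section

abbrev Vec (n : ℕ) := Fin n → ℝ

/-- Partial derivative of an extended field `f(x,v)` with respect to `x^q`. -/
def pdx {n : ℕ} (f : Vec n × Vec n → ℝ) (q : Fin n) (p : Vec n × Vec n) : ℝ :=
  fderiv ℝ f p (Pi.single q 1, 0)

/-- Partial derivative of an extended field `f(x,v)` with respect to `v^k`. -/
def pdv {n : ℕ} (f : Vec n × Vec n → ℝ) (k : Fin n) (p : Vec n × Vec n) : ℝ :=
  fderiv ℝ f p (0, Pi.single k 1)

/-- Christoffel symbols `Γ^k_{ij}(x)` of a metric `g`. -/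
def Christoffel {n : ℕ} (g : Vec n → Matrix (Fin n) (Fin n) ℝ) (k i j : Fin n)
    (x : Vec n) : ℝ :=
  (1/2) * ∑ l, (g x)⁻¹ k l *
    (fderiv ℝ (fun y => g y l j) x (Pi.single i 1)
      + fderiv ℝ (fun y => g y l i) x (Pi.single j 1)
      - fderiv ℝ (fun y => g y i j) x (Pi.single l 1))

/-- `|v|`, the norm of `v` in the metric `g` at the point `x`. -/
def nrm {n : ℕ} (g : Vec n → Matrix (Fin n) (Fin n) ℝ) (x v : Vec n) : ℝ :=
  Real.sqrt (∑ i, ∑ j, g x i j * v i * v j)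

/-- Index lowering: `v_r = Σ_s g_{rs} v^s`. -/
def lower {n : ℕ} (g : Vec n → Matrix (Fin n) (Fin n) ℝ) (x v : Vec n) (r : Fin n) : ℝ :=
  ∑ s, g x r s * v s

/-- Spatial gradient `∇_q f` of an extended scalar field. -/
def sgrad {n : ℕ} (g : Vec n → Matrix (Fin n) (Fin n) ℝ) (f : Vec n × Vec n → ℝ)
    (q : Fin n) (p : Vec n × Vec n) : ℝ :=
  pdx f q p - ∑ a, ∑ b, p.2 a * Christoffel g b q a p.1 * pdv f b p

/-- Spatial gradient `∇_q X_j` of an extended covector field. -/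
def sgradCov {n : ℕ} (g : Vec n → Matrix (Fin n) (Fin n) ℝ) (X : Fin n → Vec n × Vec n → ℝ)
    (q j : Fin n) (p : Vec n × Vec n) : ℝ :=
  pdx (X j) q p - ∑ a, ∑ b, p.2 a * Christoffel g b q a p.1 * pdv (X j) b p
    - ∑ b, Christoffel g b q j p.1 * X b p

def Qf {n : ℕ} (g : Vec n → Matrix (Fin n) (Fin n) ℝ) (q : Vec n × Vec n) : ℝ :=
  ∑ i, ∑ j, g q.1 i j * q.2 i * q.2 j

def DQval {n : ℕ} (g : Vec n → Matrix (Fin n) (Fin n) ℝ) (p d : Vec n × Vec n) : ℝ :=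
  (∑ i, ∑ j, fderiv ℝ (fun y => g y i j) p.1 d.1 * p.2 i * p.2 j)
    + ∑ i, ∑ j, g p.1 i j * (d.2 i * p.2 j + p.2 i * d.2 j)

def Dlowval {n : ℕ} (g : Vec n → Matrix (Fin n) (Fin n) ℝ) (k : Fin n)
    (p d : Vec n × Vec n) : ℝ :=
  (∑ s, fderiv ℝ (fun y => g y k s) p.1 d.1 * p.2 s) + ∑ s, g p.1 k s * d.2 s

section AuxLemmas

variable {n : ℕ} {U : Set (Vec n)} {g : Vec n → Matrix (Fin n) (Fin n) ℝ}
  {f : Vec n → ℝ} {φ : ℝ → ℝ}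

lemma Qder (hU : IsOpen U) (hg : ∀ i j, ContDiffOn ℝ ∞ (fun x => g x i j) U)
    (p : Vec n × Vec n) (hp : p.1 ∈ U) :
    ∃ D : (Vec n × Vec n) →L[ℝ] ℝ,
      HasFDerivAt (Qf g) D p ∧ ∀ d : Vec n × Vec n, D d = DQval g p d := by
  have hgd : ∀ i j, HasFDerivAt (fun y => g y i j) (fderiv ℝ (fun y => g y i j) p.1) p.1 :=
    fun i j => (((hg i j).contDiffAt (hU.mem_nhds hp)).differentiableAt (by norm_num)).hasFDerivAt
  have hgp : ∀ i j, HasFDerivAt (fun q : Vec n × Vec n => g q.1 i j)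
      ((fderiv ℝ (fun y => g y i j) p.1).comp (ContinuousLinearMap.fst ℝ (Vec n) (Vec n))) p :=
    fun i j => (hgd i j).comp p (hasFDerivAt_fst)
  have hv : ∀ i : Fin n, HasFDerivAt (fun q : Vec n × Vec n => q.2 i)
      ((ContinuousLinearMap.proj i).comp (ContinuousLinearMap.snd ℝ (Vec n) (Vec n))) p :=
    fun i => ((ContinuousLinearMap.proj i).comp
      (ContinuousLinearMap.snd ℝ (Vec n) (Vec n))).hasFDerivAt
  refine ⟨_, HasFDerivAt.fun_sum (fun i _ => HasFDerivAt.fun_sum (fun j _ =>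
    ((hgp i j).mul (hv i)).mul (hv j))), fun d => ?_⟩
  simp only [DQval, ContinuousLinearMap.sum_apply, ContinuousLinearMap.add_apply,
    ContinuousLinearMap.smul_apply, ContinuousLinearMap.comp_apply,
    ContinuousLinearMap.coe_fst', ContinuousLinearMap.coe_snd',
    ContinuousLinearMap.proj_apply, smul_eq_mul, Pi.mul_apply, ← Finset.sum_add_distrib]
  exact Finset.sum_congr rfl fun i _ => Finset.sum_congr rfl fun j _ => by ring

lemma lowder (hU : IsOpen U) (hg : ∀ i j, ContDiffOn ℝ ∞ (fun x => g x i j) U)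
    (k : Fin n) (p : Vec n × Vec n) (hp : p.1 ∈ U) :
    ∃ D : (Vec n × Vec n) →L[ℝ] ℝ,
      HasFDerivAt (fun q : Vec n × Vec n => lower g q.1 q.2 k) D p ∧
      ∀ d : Vec n × Vec n, D d = Dlowval g k p d := by
  have hgd : ∀ i j, HasFDerivAt (fun y => g y i j) (fderiv ℝ (fun y => g y i j) p.1) p.1 :=
    fun i j => (((hg i j).contDiffAt (hU.mem_nhds hp)).differentiableAt (by norm_num)).hasFDerivAt
  have hgp : ∀ i j, HasFDerivAt (fun q : Vec n × Vec n => g q.1 i j)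
      ((fderiv ℝ (fun y => g y i j) p.1).comp (ContinuousLinearMap.fst ℝ (Vec n) (Vec n))) p :=
    fun i j => (hgd i j).comp p (hasFDerivAt_fst)
  have hv : ∀ i : Fin n, HasFDerivAt (fun q : Vec n × Vec n => q.2 i)
      ((ContinuousLinearMap.proj i).comp (ContinuousLinearMap.snd ℝ (Vec n) (Vec n))) p :=
    fun i => ((ContinuousLinearMap.proj i).comp
      (ContinuousLinearMap.snd ℝ (Vec n) (Vec n))).hasFDerivAt
  refine ⟨_, HasFDerivAt.fun_sum (fun s _ => (hgp k s).mul (hv s)), fun d => ?_⟩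
  simp only [Dlowval, ContinuousLinearMap.sum_apply, ContinuousLinearMap.add_apply,
    ContinuousLinearMap.smul_apply, ContinuousLinearMap.comp_apply,
    ContinuousLinearMap.coe_fst', ContinuousLinearMap.coe_snd',
    ContinuousLinearMap.proj_apply, smul_eq_mul, ← Finset.sum_add_distrib]
  exact Finset.sum_congr rfl fun i _ => by ring

lemma cder (hU : IsOpen U) (hf : ContDiffOn ℝ ∞ f U)
    (p : Vec n × Vec n) (hp : p.1 ∈ U) :
    ∃ D : (Vec n × Vec n) →L[ℝ] ℝ,
      HasFDerivAt (fun q : Vec n × Vec n => Real.exp (-(f q.1))) D p ∧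
      ∀ d : Vec n × Vec n, D d = Real.exp (-(f p.1)) * -(fderiv ℝ f p.1 d.1) := by
  have hfd : HasFDerivAt f (fderiv ℝ f p.1) p.1 :=
    ((hf.contDiffAt (hU.mem_nhds hp)).differentiableAt (by norm_num)).hasFDerivAt
  refine ⟨_, (hfd.neg.exp).comp p (hasFDerivAt_fst), fun d => ?_⟩
  simp [smul_eq_mul]

lemma Lder (hU : IsOpen U) (hg : ∀ i j, ContDiffOn ℝ ∞ (fun x => g x i j) U)
    (hf : ContDiffOn ℝ ∞ f U) (hφ : ContDiffOn ℝ ∞ φ (Ioi (0:ℝ)))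
    (p : Vec n × Vec n) (hp : p.1 ∈ U) (hQ : 0 < Qf g p) :
    ∃ D : (Vec n × Vec n) →L[ℝ] ℝ,
      HasFDerivAt (fun q : Vec n × Vec n => φ (Real.exp (-(f q.1)) * Real.sqrt (Qf g q))) D p ∧
      ∀ d : Vec n × Vec n, D d =
        deriv φ (Real.exp (-(f p.1)) * Real.sqrt (Qf g p)) *
          (Real.exp (-(f p.1)) * -(fderiv ℝ f p.1 d.1) * Real.sqrt (Qf g p)
            + Real.exp (-(f p.1)) * (DQval g p d / (2 * Real.sqrt (Qf g p)))) := by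
  obtain ⟨DQ, hDQ, hDQv⟩ := Qder hU hg p hp
  obtain ⟨Dc, hDc, hDcv⟩ := cder hU hf p hp
  have hsqQ : (0:ℝ) < Real.sqrt (Qf g p) := Real.sqrt_pos.2 hQ
  have hsq : HasFDerivAt (fun q : Vec n × Vec n => Real.sqrt (Qf g q))
      ((1 / (2 * Real.sqrt (Qf g p))) • DQ) p := hDQ.sqrt (ne_of_gt hQ)
  have hu : HasFDerivAt (fun q : Vec n × Vec n => Real.exp (-(f q.1)) * Real.sqrt (Qf g q))
      (Real.exp (-(f p.1)) • ((1 / (2 * Real.sqrt (Qf g p))) • DQ)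
        + Real.sqrt (Qf g p) • Dc) p := hDc.mul hsq
  have hupos : 0 < Real.exp (-(f p.1)) * Real.sqrt (Qf g p) :=
    mul_pos (Real.exp_pos _) hsqQ
  have hφd : HasDerivAt φ (deriv φ (Real.exp (-(f p.1)) * Real.sqrt (Qf g p)))
      (Real.exp (-(f p.1)) * Real.sqrt (Qf g p)) :=
    ((hφ.contDiffAt (isOpen_Ioi.mem_nhds hupos)).differentiableAt (by norm_num)).hasDerivAt
  refine ⟨_, hφd.comp_hasFDerivAt p hu, fun d => ?_⟩
  simp only [ContinuousLinearMap.smul_apply, ContinuousLinearMap.add_apply, smul_eq_mul,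
    hDQv, hDcv]
  ring

lemma Wder (hU : IsOpen U) (hg : ∀ i j, ContDiffOn ℝ ∞ (fun x => g x i j) U)
    (hf : ContDiffOn ℝ ∞ f U)
    (p : Vec n × Vec n) (hp : p.1 ∈ U) (hQ : 0 < Qf g p) :
    ∃ D : (Vec n × Vec n) →L[ℝ] ℝ,
      HasFDerivAt (fun q : Vec n × Vec n => Real.sqrt (Qf g q) * Real.exp (-(f q.1))) D p ∧
      ∀ d : Vec n × Vec n, D d =
        (DQval g p d / (2 * Real.sqrt (Qf g p))) * Real.exp (-(f p.1))
          + Real.sqrt (Qf g p) * (Real.exp (-(f p.1)) * -(fderiv ℝ f p.1 d.1)) := by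
  obtain ⟨DQ, hDQ, hDQv⟩ := Qder hU hg p hp
  obtain ⟨Dc, hDc, hDcv⟩ := cder hU hf p hp
  have hsq : HasFDerivAt (fun q : Vec n × Vec n => Real.sqrt (Qf g q))
      ((1 / (2 * Real.sqrt (Qf g p))) • DQ) p := hDQ.sqrt (ne_of_gt hQ)
  refine ⟨_, hsq.mul hDc, fun d => ?_⟩
  simp only [ContinuousLinearMap.smul_apply, ContinuousLinearMap.add_apply, smul_eq_mul,
    hDQv, hDcv]
  ring

lemma Yder (hU : IsOpen U) (hg : ∀ i j, ContDiffOn ℝ ∞ (fun x => g x i j) U)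
    (hf : ContDiffOn ℝ ∞ f U) (hφ1 : ContDiffOn ℝ ∞ (deriv φ) (Ioi (0:ℝ)))
    (k : Fin n) (p : Vec n × Vec n) (hp : p.1 ∈ U) (hQ : 0 < Qf g p) :
    ∃ D : (Vec n × Vec n) →L[ℝ] ℝ,
      HasFDerivAt (fun q : Vec n × Vec n =>
        deriv φ (Real.exp (-(f q.1)) * Real.sqrt (Qf g q)) *
          (Real.exp (-(f q.1)) * (lower g q.1 q.2 k * (Real.sqrt (Qf g q))⁻¹))) D p ∧
      ∀ d : Vec n × Vec n, D d =
        deriv (deriv φ) (Real.exp (-(f p.1)) * Real.sqrt (Qf g p)) *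
            (Real.exp (-(f p.1)) * -(fderiv ℝ f p.1 d.1) * Real.sqrt (Qf g p)
              + Real.exp (-(f p.1)) * (DQval g p d / (2 * Real.sqrt (Qf g p)))) *
            (Real.exp (-(f p.1)) * (lower g p.1 p.2 k * (Real.sqrt (Qf g p))⁻¹))
          + deriv φ (Real.exp (-(f p.1)) * Real.sqrt (Qf g p)) *
            (Real.exp (-(f p.1)) * -(fderiv ℝ f p.1 d.1) *
                  (lower g p.1 p.2 k * (Real.sqrt (Qf g p))⁻¹)
              + Real.exp (-(f p.1)) * (Dlowval g k p d / Real.sqrt (Qf g p))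
              - Real.exp (-(f p.1)) *
                  (lower g p.1 p.2 k * (DQval g p d / (2 * Real.sqrt (Qf g p)))
                    / Real.sqrt (Qf g p) ^ 2)) := by
  obtain ⟨DQ, hDQ, hDQv⟩ := Qder hU hg p hp
  obtain ⟨Dc, hDc, hDcv⟩ := cder hU hf p hp
  obtain ⟨Dl, hDl, hDlv⟩ := lowder hU hg k p hp
  have hsqQ : (0:ℝ) < Real.sqrt (Qf g p) := Real.sqrt_pos.2 hQ
  have hsq : HasFDerivAt (fun q : Vec n × Vec n => Real.sqrt (Qf g q))
      ((1 / (2 * Real.sqrt (Qf g p))) • DQ) p := hDQ.sqrt (ne_of_gt hQ)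
  have hu : HasFDerivAt (fun q : Vec n × Vec n => Real.exp (-(f q.1)) * Real.sqrt (Qf g q))
      (Real.exp (-(f p.1)) • ((1 / (2 * Real.sqrt (Qf g p))) • DQ)
        + Real.sqrt (Qf g p) • Dc) p := hDc.mul hsq
  have hupos : 0 < Real.exp (-(f p.1)) * Real.sqrt (Qf g p) :=
    mul_pos (Real.exp_pos _) hsqQ
  have hφd : HasDerivAt (deriv φ)
      (deriv (deriv φ) (Real.exp (-(f p.1)) * Real.sqrt (Qf g p)))
      (Real.exp (-(f p.1)) * Real.sqrt (Qf g p)) :=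
    ((hφ1.contDiffAt (isOpen_Ioi.mem_nhds hupos)).differentiableAt (by norm_num)).hasDerivAt
  have hA : HasFDerivAt (fun q : Vec n × Vec n =>
      deriv φ (Real.exp (-(f q.1)) * Real.sqrt (Qf g q)))
      ((deriv (deriv φ) (Real.exp (-(f p.1)) * Real.sqrt (Qf g p))) •
        (Real.exp (-(f p.1)) • ((1 / (2 * Real.sqrt (Qf g p))) • DQ)
          + Real.sqrt (Qf g p) • Dc)) p := by
    have := hφd.comp_hasFDerivAt p hu; exact this
  have hinv : HasFDerivAt (fun q : Vec n × Vec n => (Real.sqrt (Qf g q))⁻¹)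
      ((-(Real.sqrt (Qf g p) ^ 2)⁻¹) • ((1 / (2 * Real.sqrt (Qf g p))) • DQ)) p :=
    (hasDerivAt_inv (ne_of_gt hsqQ)).comp_hasFDerivAt p hsq
  have hB := hDc.mul (hDl.mul hinv)
  refine ⟨_, hA.mul hB, fun d => ?_⟩
  simp only [ContinuousLinearMap.smul_apply, ContinuousLinearMap.add_apply,
    ContinuousLinearMap.sub_apply, smul_eq_mul, Pi.mul_apply, hDQv, hDcv, hDlv]
  have hS0 : Real.sqrt (Qf g p) ≠ 0 := ne_of_gt hsqQ
  generalize hSS : Real.sqrt (Qf g p) = S at hS0 ⊢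
  field_simp
  ring

lemma OmegaOpen (hU : IsOpen U) (hg : ∀ i j, ContDiffOn ℝ ∞ (fun x => g x i j) U) :
    IsOpen {q : Vec n × Vec n | q.1 ∈ U ∧ 0 < Qf g q} := by
  rw [isOpen_iff_mem_nhds]
  rintro p ⟨hp, hQ⟩
  obtain ⟨D, hD, -⟩ := Qder hU hg p hp
  have hc : ContinuousAt (Qf g) p := hD.differentiableAt.continuousAt
  exact Filter.mem_of_superset
    (Filter.inter_mem ((hU.preimage continuous_fst).mem_nhds hp) (hc (Ioi_mem_nhds hQ)))
    (fun q hq => ⟨hq.1, hq.2⟩)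

lemma dq_single (G : Matrix (Fin n) (Fin n) ℝ) (w : Vec n) (k : Fin n)
    (hsym : ∀ i j, G i j = G j i) :
    ∑ i, ∑ j, G i j * ((Pi.single k 1 : Vec n) i * w j + w i * (Pi.single k 1 : Vec n) j)
      = 2 * ∑ s, G k s * w s := by
  have h1 : ∀ i, ∑ j, G i j * ((Pi.single k 1 : Vec n) i * w j + w i * (Pi.single k 1 : Vec n) j)
      = (Pi.single k 1 : Vec n) i * (∑ j, G i j * w j) + G i k * w i := by
    intro i
    rw [Finset.sum_congr rfl fun j _ => mul_add (G i j) _ _, Finset.sum_add_distrib]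
    congr 1
    · rw [Finset.mul_sum]; exact Finset.sum_congr rfl fun j _ => by ring
    · simp [Pi.single_apply]
  rw [Finset.sum_congr rfl fun i _ => h1 i, Finset.sum_add_distrib]
  have e1 : ∑ i, (Pi.single k 1 : Vec n) i * (∑ j, G i j * w j) = ∑ j, G k j * w j := by
    simp [Pi.single_apply]
  have e2 : ∑ i, G i k * w i = ∑ s, G k s * w s :=
    Finset.sum_congr rfl fun i _ => by rw [hsym i k]
  rw [e1, e2]; ring

lemma DQval_single_v (p : Vec n × Vec n) (hsym : ∀ i j, g p.1 i j = g p.1 j i) (k : Fin n) :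
    DQval g p ((0 : Vec n), Pi.single k 1) = 2 * lower g p.1 p.2 k := by
  show (∑ i, ∑ j, fderiv ℝ (fun y => g y i j) p.1 (0 : Vec n) * p.2 i * p.2 j)
      + (∑ i, ∑ j, g p.1 i j *
          ((Pi.single k 1 : Vec n) i * p.2 j + p.2 i * (Pi.single k 1 : Vec n) j))
      = 2 * lower g p.1 p.2 k
  rw [dq_single (g p.1) p.2 k hsym]
  simp [lower]

lemma DQval_single_x (p : Vec n × Vec n) (q : Fin n) :
    DQval g p (Pi.single q 1, (0 : Vec n)) =
      ∑ i, ∑ j, fderiv ℝ (fun y => g y i j) p.1 (Pi.single q 1) * p.2 i * p.2 j := by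
  simp [DQval]

lemma Dlowval_single_v (p : Vec n × Vec n) (k s : Fin n) :
    Dlowval g k p ((0 : Vec n), Pi.single s 1) = g p.1 k s := by
  simp [Dlowval, Pi.single_apply]

lemma Dlowval_single_x (p : Vec n × Vec n) (k q : Fin n) :
    Dlowval g k p (Pi.single q 1, (0 : Vec n)) =
      ∑ s, fderiv ℝ (fun y => g y k s) p.1 (Pi.single q 1) * p.2 s := by
  simp [Dlowval]

end AuxLemmas

lemma tsumA {n : ℕ} (d : Fin n → Fin n → Fin n → ℝ) (v : Vec n) :
    ∑ s, ∑ a, ∑ t, v a * d s t a * v t * v s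
      = ∑ q, (∑ i, ∑ j, d q i j * v i * v j) * v q := by
  refine Finset.sum_congr rfl fun s _ => ?_
  rw [Finset.sum_comm, Finset.sum_mul]
  refine Finset.sum_congr rfl fun t _ => ?_
  rw [Finset.sum_mul]
  exact Finset.sum_congr rfl fun a _ => by ring

lemma tsumB {n : ℕ} (d : Fin n → Fin n → Fin n → ℝ) (v : Vec n) :
    ∑ s, ∑ a, ∑ t, v a * d a t s * v t * v s
      = ∑ q, (∑ i, ∑ j, d q i j * v i * v j) * v q := by
  rw [Finset.sum_comm]
  refine Finset.sum_congr rfl fun a _ => ?_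
  rw [Finset.sum_comm, Finset.sum_mul]
  refine Finset.sum_congr rfl fun t _ => ?_
  rw [Finset.sum_mul]
  exact Finset.sum_congr rfl fun s _ => by ring

lemma tsumC {n : ℕ} (d : Fin n → Fin n → Fin n → ℝ) (v : Vec n) :
    ∑ s, ∑ a, ∑ t, v a * d t s a * v t * v s
      = ∑ q, (∑ i, ∑ j, d q i j * v i * v j) * v q := by
  rw [show (∑ s, ∑ a, ∑ t, v a * d t s a * v t * v s)
      = ∑ s, ∑ t, ∑ a, v a * d t s a * v t * v s from
    Finset.sum_congr rfl fun s _ => Finset.sum_comm, Finset.sum_comm]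
  refine Finset.sum_congr rfl fun t _ => ?_
  rw [Finset.sum_mul]
  refine Finset.sum_congr rfl fun s _ => ?_
  rw [Finset.sum_mul]
  exact Finset.sum_congr rfl fun a _ => by ring

lemma GamG {n : ℕ} (v : Vec n) (G GI : Matrix (Fin n) (Fin n) ℝ)
    (gd : Fin n → Fin n → Fin n → ℝ) (Γ : Fin n → Fin n → Fin n → ℝ)
    (hsym : ∀ i j, G i j = G j i)
    (hdelta : ∀ t l, (∑ bb, G t bb * GI bb l) = if t = l then 1 else 0)
    (hGam : ∀ bb q a', Γ bb q a' =
      (1/2) * ∑ l, GI bb l * (gd q l a' + gd a' l q - gd l q a')) :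
    ∀ q a' t, (∑ bb, Γ bb q a' * G bb t)
      = (1/2) * (gd q t a' + gd a' t q - gd t q a') := by
  intro q a' t
  have h1 : ∀ bb, Γ bb q a' * G bb t
      = ∑ l, GI bb l * ((1/2) * (gd q l a' + gd a' l q - gd l q a') * G bb t) := by
    intro bb
    rw [hGam, Finset.mul_sum, Finset.sum_mul]
    exact Finset.sum_congr rfl fun l _ => by ring
  rw [Finset.sum_congr rfl fun bb _ => h1 bb, Finset.sum_comm]
  have h2 : ∀ l, (∑ bb, GI bb l * ((1/2) * (gd q l a' + gd a' l q - gd l q a') * G bb t))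
      = ((1/2) * (gd q l a' + gd a' l q - gd l q a')) * (∑ bb, G t bb * GI bb l) := by
    intro l
    rw [Finset.mul_sum]
    exact Finset.sum_congr rfl fun bb _ => by rw [hsym t bb]; ring
  rw [Finset.sum_congr rfl fun l _ => h2 l]
  have h3 : (∑ l, ((1/2) * (gd q l a' + gd a' l q - gd l q a')) * (∑ bb, G t bb * GI bb l))
      = ∑ l, ((1/2) * (gd q l a' + gd a' l q - gd l q a')) * if t = l then 1 else 0 :=
    Finset.sum_congr rfl fun l _ => by rw [hdelta t l]
  rw [h3]
  simp [mul_ite, mul_zero, mul_one, Finset.sum_ite_eq]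

lemma Gamvl {n : ℕ} (v : Vec n) (G GI : Matrix (Fin n) (Fin n) ℝ)
    (gd : Fin n → Fin n → Fin n → ℝ) (vl : Fin n → ℝ) (Γ : Fin n → Fin n → Fin n → ℝ)
    (hsym : ∀ i j, G i j = G j i)
    (hdelta : ∀ t l, (∑ bb, G t bb * GI bb l) = if t = l then 1 else 0)
    (hvl : ∀ t, vl t = ∑ s, G t s * v s)
    (hGam : ∀ bb q a', Γ bb q a' =
      (1/2) * ∑ l, GI bb l * (gd q l a' + gd a' l q - gd l q a')) :
    ∀ q a', (∑ bb, Γ bb q a' * vl bb)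
      = ∑ t, (1/2) * (gd q t a' + gd a' t q - gd t q a') * v t := by
  intro q a'
  have h1 : ∀ bb, Γ bb q a' * vl bb = ∑ t, Γ bb q a' * G bb t * v t := by
    intro bb; rw [hvl, Finset.mul_sum]
    exact Finset.sum_congr rfl fun t _ => by ring
  rw [Finset.sum_congr rfl fun bb _ => h1 bb, Finset.sum_comm]
  refine Finset.sum_congr rfl fun t _ => ?_
  rw [← Finset.sum_mul, GamG v G GI gd Γ hsym hdelta hGam]

section EL

variable {n : ℕ} (v : Vec n) (G GI : Matrix (Fin n) (Fin n) ℝ)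
  (gd : Fin n → Fin n → Fin n → ℝ) (fq vl Qd : Fin n → ℝ)
  (E : Fin n → Fin n → ℝ) (N c a b : ℝ) (k : Fin n)
  (Γ : Fin n → Fin n → Fin n → ℝ) (P1 P2 PX Fv : Fin n → ℝ) (XL : ℝ)

set_option maxHeartbeats 2000000 in
/-- The Euler–Lagrange identity, pure algebra form. -/
lemma ELalgebra
    (hsym : ∀ i j, G i j = G j i)
    (hgdsym : ∀ q i j, gd q i j = gd q j i)
    (hdelta : ∀ t l, (∑ bb, G t bb * GI bb l) = if t = l then 1 else 0)
    (hN0 : N ≠ 0)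
    (hvl : ∀ t, vl t = ∑ s, G t s * v s)
    (hQd : ∀ q, Qd q = ∑ i, ∑ j, gd q i j * v i * v j)
    (hE : ∀ q t, E q t = ∑ j, gd q t j * v j)
    (hNsq : N ^ 2 = ∑ r, v r * vl r)
    (hGam : ∀ bb q a', Γ bb q a' =
      (1/2) * ∑ l, GI bb l * (gd q l a' + gd a' l q - gd l q a'))
    (hFv : ∀ r, Fv r = -(N ^ 2) * fq r + 2 * (∑ s, fq s * v s) * vl r)
    (hP1 : ∀ bb, P1 bb = a * c * vl bb / N)
    (hP2 : ∀ s, P2 s = b * c ^ 2 * vl s * vl k / N ^ 2 + a * c * G k s / N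
      - a * c * vl k * vl s / N ^ 3)
    (hPX : ∀ q, PX q = b * (c * (Qd q / (2 * N)) - c * fq q * N) * (c * vl k / N)
      + a * (c * E q k / N - c * fq q * vl k / N - c * vl k * Qd q / (2 * N ^ 3)))
    (hXL : XL = a * (c * Qd k / (2 * N) - c * fq k * N)) :
    (∑ s, P2 s * (∑ r, GI s r * Fv r))
      + (∑ s, (PX s - (∑ a', ∑ bb, v a' * Γ bb s a' * P2 bb)
          - (∑ bb, Γ bb s k * P1 bb)) * v s)
      - (XL - ∑ a', ∑ bb, v a' * Γ bb k a' * P1 bb) = 0 := by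
  -- abbreviations
  set fv : ℝ := ∑ s, fq s * v s with hfv
  set Qv : ℝ := ∑ s, Qd s * v s with hQv
  set Dk : ℝ := ∑ s, E s k * v s with hDk
  -- lowered Christoffel contraction with the metric
  have hGamG : ∀ q a' t, (∑ bb, Γ bb q a' * G bb t)
      = (1/2) * (gd q t a' + gd a' t q - gd t q a') := by
    intro q a' t
    have h1 : ∀ bb, Γ bb q a' * G bb t
        = ∑ l, GI bb l * ((1/2) * (gd q l a' + gd a' l q - gd l q a') * G bb t) := by
      intro bb
      rw [hGam, Finset.mul_sum, Finset.sum_mul]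
      exact Finset.sum_congr rfl fun l _ => by ring
    rw [Finset.sum_congr rfl fun bb _ => h1 bb, Finset.sum_comm]
    have h2 : ∀ l, (∑ bb, GI bb l * ((1/2) * (gd q l a' + gd a' l q - gd l q a') * G bb t))
        = ((1/2) * (gd q l a' + gd a' l q - gd l q a')) * (∑ bb, G t bb * GI bb l) := by
      intro l
      rw [Finset.mul_sum]
      exact Finset.sum_congr rfl fun bb _ => by rw [hsym t bb]; ring
    rw [Finset.sum_congr rfl fun l _ => h2 l]
    have h3 : (∑ l, ((1/2) * (gd q l a' + gd a' l q - gd l q a')) * (∑ bb, G t bb * GI bb l))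
        = ∑ l, ((1/2) * (gd q l a' + gd a' l q - gd l q a')) * if t = l then 1 else 0 :=
      Finset.sum_congr rfl fun l _ => by rw [hdelta t l]
    rw [h3]
    simp [mul_ite, mul_zero, mul_one, Finset.sum_ite_eq]
  -- contraction with lowered vector
  have hGamvl : ∀ q a', (∑ bb, Γ bb q a' * vl bb)
      = ∑ t, (1/2) * (gd q t a' + gd a' t q - gd t q a') * v t := by
    intro q a'
    have h1 : ∀ bb, Γ bb q a' * vl bb = ∑ t, Γ bb q a' * G bb t * v t := by
      intro bb; rw [hvl, Finset.mul_sum]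
      exact Finset.sum_congr rfl fun t _ => by ring
    rw [Finset.sum_congr rfl fun bb _ => h1 bb, Finset.sum_comm]
    refine Finset.sum_congr rfl fun t _ => ?_
    rw [← Finset.sum_mul, hGamG]
  have hGamGk : ∀ q a', (∑ bb, Γ bb q a' * G k bb)
      = (1/2) * (gd q k a' + gd a' k q - gd k q a') := by
    intro q a'
    rw [show (∑ bb, Γ bb q a' * G k bb) = ∑ bb, Γ bb q a' * G bb k from
      Finset.sum_congr rfl fun bb _ => by rw [hsym k bb]]
    exact hGamG q a' k
  -- inverse-metric contractions
  have hvlGI : ∀ r, (∑ s, vl s * GI s r) = v r := by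
    intro r
    have h1 : ∀ s, vl s * GI s r = ∑ t, G s t * v t * GI s r := by
      intro s; rw [hvl, Finset.sum_mul]
    rw [Finset.sum_congr rfl fun s _ => h1 s, Finset.sum_comm]
    have h2 : ∀ t, (∑ s, G s t * v t * GI s r) = v t * ∑ s, G t s * GI s r := by
      intro t; rw [Finset.mul_sum]
      exact Finset.sum_congr rfl fun s _ => by rw [hsym t s]; ring
    rw [Finset.sum_congr rfl fun t _ => h2 t]
    have h3 : (∑ t, v t * (∑ s, G t s * GI s r)) = ∑ t, v t * if t = r then 1 else 0 :=
      Finset.sum_congr rfl fun t _ => by rw [hdelta t r]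
    rw [h3]
    simp [mul_ite, mul_zero, mul_one, Finset.sum_ite_eq']
  have hI1 : (∑ s, vl s * (∑ r, GI s r * Fv r)) = N ^ 2 * fv := by
    have h1 : ∀ s, vl s * (∑ r, GI s r * Fv r) = ∑ r, vl s * GI s r * Fv r := by
      intro s; rw [Finset.mul_sum]; exact Finset.sum_congr rfl fun r _ => by ring
    rw [Finset.sum_congr rfl fun s _ => h1 s, Finset.sum_comm]
    have h2 : ∀ r, (∑ s, vl s * GI s r * Fv r) = v r * Fv r := by
      intro r; rw [← Finset.sum_mul, hvlGI]
    rw [Finset.sum_congr rfl fun r _ => h2 r]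
    have h3 : ∀ r, v r * Fv r = -(N^2) * (fq r * v r) + (2 * fv) * (v r * vl r) := by
      intro r; rw [hFv]; ring
    rw [Finset.sum_congr rfl fun r _ => h3 r, Finset.sum_add_distrib,
      ← Finset.mul_sum, ← Finset.mul_sum, ← hNsq]
    have h4 : (∑ r, fq r * v r) = fv := rfl
    rw [h4]; ring
  have hI2 : ∀ kk, (∑ s, G kk s * (∑ r, GI s r * Fv r)) = Fv kk := by
    intro kk
    have h1 : ∀ s, G kk s * (∑ r, GI s r * Fv r) = ∑ r, G kk s * GI s r * Fv r := by
      intro s; rw [Finset.mul_sum]; exact Finset.sum_congr rfl fun r _ => by ring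
    rw [Finset.sum_congr rfl fun s _ => h1 s, Finset.sum_comm]
    have h2 : ∀ r, (∑ s, G kk s * GI s r * Fv r) = (if kk = r then 1 else 0) * Fv r := by
      intro r; rw [← Finset.sum_mul, hdelta kk r]
    rw [Finset.sum_congr rfl fun r _ => h2 r]
    simp [ite_mul, Finset.sum_ite_eq]
  -- term T1
  have hT1 : (∑ s, P2 s * (∑ r, GI s r * Fv r))
      = (b * c^2 * vl k / N^2 - a * c * vl k / N^3) * (N^2 * fv) + (a * c / N) * Fv k := by
    have h1 : ∀ s, P2 s * (∑ r, GI s r * Fv r)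
        = (b * c^2 * vl k / N^2 - a * c * vl k / N^3) * (vl s * (∑ r, GI s r * Fv r))
          + (a * c / N) * (G k s * (∑ r, GI s r * Fv r)) := by
      intro s; rw [hP2]; ring
    rw [Finset.sum_congr rfl fun s _ => h1 s, Finset.sum_add_distrib,
      ← Finset.mul_sum, ← Finset.mul_sum, hI1, hI2]
  -- J-identities
  have hJ4 : (∑ s, ∑ a', ∑ t, v a' * ((1/2) * (gd s t a' + gd a' t s - gd t s a')) * v t * v s)
      = Qv / 2 := by
    have h1 : ∀ s a' t, v a' * ((1/2) * (gd s t a' + gd a' t s - gd t s a')) * v t * v s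
        = (1/2) * (v a' * gd s t a' * v t * v s) + (1/2) * (v a' * gd a' t s * v t * v s)
          - (1/2) * (v a' * gd t s a' * v t * v s) := fun s a' t => by ring
    simp only [h1, Finset.sum_add_distrib, Finset.sum_sub_distrib, ← Finset.mul_sum]
    rw [tsumA gd v, tsumB gd v, tsumC gd v]
    have h2 : (∑ q, (∑ i, ∑ j, gd q i j * v i * v j) * v q) = Qv := by
      rw [hQv]; exact Finset.sum_congr rfl fun q _ => by rw [← hQd q]
    rw [h2]; ring
  have hJ5 : (∑ s, ∑ a', v a' * ((1/2) * (gd s k a' + gd a' k s - gd k s a')) * v s)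
      = Dk - Qd k / 2 := by
    have h1 : ∀ s a', v a' * ((1/2) * (gd s k a' + gd a' k s - gd k s a')) * v s
        = (1/2) * (v a' * gd s k a' * v s) + (1/2) * (v a' * gd a' k s * v s)
          - (1/2) * (v a' * gd k s a' * v s) := fun s a' => by ring
    simp only [h1, Finset.sum_add_distrib, Finset.sum_sub_distrib, ← Finset.mul_sum]
    have e1 : (∑ s, ∑ a', v a' * gd s k a' * v s) = Dk := by
      rw [hDk]
      refine Finset.sum_congr rfl fun s _ => ?_
      rw [hE, Finset.sum_mul]
      exact Finset.sum_congr rfl fun a' _ => by ring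
    have e2 : (∑ s, ∑ a', v a' * gd a' k s * v s) = Dk := by
      rw [Finset.sum_comm, hDk]
      refine Finset.sum_congr rfl fun a' _ => ?_
      rw [hE, Finset.sum_mul]
      exact Finset.sum_congr rfl fun s _ => by ring
    have e3 : (∑ s, ∑ a', v a' * gd k s a' * v s) = Qd k := by
      rw [hQd]
      refine Finset.sum_congr rfl fun s _ => ?_
      exact Finset.sum_congr rfl fun a' _ => by ring
    rw [e1, e2, e3]; ring
  have hJ6 : (∑ s, (∑ t, (1/2) * (gd s t k + gd k t s - gd t s k) * v t) * v s)
      = Qd k / 2 := by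
    have h1 : ∀ s, (∑ t, (1/2) * (gd s t k + gd k t s - gd t s k) * v t) * v s
        = ∑ t, ((1/2) * (gd s t k * v t * v s) + (1/2) * (gd k t s * v t * v s)
            - (1/2) * (gd t s k * v t * v s)) := by
      intro s; rw [Finset.sum_mul]
      exact Finset.sum_congr rfl fun t _ => by ring
    simp only [h1, Finset.sum_add_distrib, Finset.sum_sub_distrib, ← Finset.mul_sum]
    have e1 : (∑ s, ∑ t, gd s t k * v t * v s) = Dk := by
      rw [hDk]
      refine Finset.sum_congr rfl fun s _ => ?_
      rw [hE, Finset.sum_mul]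
      exact Finset.sum_congr rfl fun t _ => by rw [hgdsym s t k]
    have e2 : (∑ s, ∑ t, gd k t s * v t * v s) = Qd k := by
      rw [Finset.sum_comm, hQd]
    have e3 : (∑ s, ∑ t, gd t s k * v t * v s) = Dk := by
      rw [Finset.sum_comm, hDk]
      refine Finset.sum_congr rfl fun t _ => ?_
      rw [hE, Finset.sum_mul]
      exact Finset.sum_congr rfl fun s _ => by rw [hgdsym t s k]; ring
    rw [e1, e2, e3]; ring
  have hJ7 : (∑ a', ∑ t, v a' * ((1/2) * (gd k t a' + gd a' t k - gd t k a')) * v t)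
      = Qd k / 2 := by
    have h1 : ∀ a' t, v a' * ((1/2) * (gd k t a' + gd a' t k - gd t k a')) * v t
        = (1/2) * (gd k t a' * v t * v a') + (1/2) * (v a' * gd a' t k * v t)
          - (1/2) * (v a' * gd t k a' * v t) := fun a' t => by ring
    simp only [h1, Finset.sum_add_distrib, Finset.sum_sub_distrib, ← Finset.mul_sum]
    have e1 : (∑ a', ∑ t, gd k t a' * v t * v a') = Qd k := by
      rw [Finset.sum_comm, hQd]
    have e2 : (∑ a', ∑ t, v a' * gd a' t k * v t) = Dk := by
      rw [hDk]
      refine Finset.sum_congr rfl fun a' _ => ?_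
      rw [hE, Finset.sum_mul]
      exact Finset.sum_congr rfl fun t _ => by rw [hgdsym a' t k]; ring
    have e3 : (∑ a', ∑ t, v a' * gd t k a' * v t) = Dk := by
      rw [Finset.sum_comm, hDk]
      refine Finset.sum_congr rfl fun t _ => ?_
      rw [hE, Finset.sum_mul]
      exact Finset.sum_congr rfl fun a' _ => by ring
    rw [e1, e2, e3]; ring
  -- term S1
  have hS1 : (∑ s, PX s * v s)
      = b * (c * (Qv / (2 * N)) - c * fv * N) * (c * vl k / N)
        + a * (c * Dk / N - c * fv * vl k / N - c * vl k * Qv / (2 * N ^ 3)) := by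
    have h1 : ∀ s, PX s * v s
        = (b * c * (c * vl k / N) / (2 * N) - a * c * vl k / (2 * N ^ 3)) * (Qd s * v s)
          - (b * c * N * (c * vl k / N) + a * c * vl k / N) * (fq s * v s)
          + (a * c / N) * (E s k * v s) := by
      intro s; rw [hPX]; ring
    rw [Finset.sum_congr rfl fun s _ => h1 s]
    simp only [Finset.sum_add_distrib, Finset.sum_sub_distrib, ← Finset.mul_sum]
    rw [← hQv, ← hfv, ← hDk]
    field_simp
    ring
  -- term S2
  have hS2 : (∑ s, (∑ a', ∑ bb, v a' * Γ bb s a' * P2 bb) * v s)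
      = (b * c^2 * vl k / N^2 - a * c * vl k / N^3) * (Qv / 2)
        + (a * c / N) * (Dk - Qd k / 2) := by
    have hinner : ∀ s a', (∑ bb, v a' * Γ bb s a' * P2 bb)
        = (b * c^2 * vl k / N^2 - a * c * vl k / N^3)
            * (v a' * ∑ t, (1/2) * (gd s t a' + gd a' t s - gd t s a') * v t)
          + (a * c / N) * (v a' * ((1/2) * (gd s k a' + gd a' k s - gd k s a'))) := by
      intro s a'
      have h1 : ∀ bb, v a' * Γ bb s a' * P2 bb
          = (b * c^2 * vl k / N^2 - a * c * vl k / N^3) * v a' * (Γ bb s a' * vl bb)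
            + (a * c / N) * v a' * (Γ bb s a' * G k bb) := by
        intro bb; rw [hP2]; ring
      rw [Finset.sum_congr rfl fun bb _ => h1 bb, Finset.sum_add_distrib,
        ← Finset.mul_sum, ← Finset.mul_sum, hGamvl, hGamGk]
      ring
    have hpull : ∀ s a', v a' * (∑ t, (1/2) * (gd s t a' + gd a' t s - gd t s a') * v t) * v s
        = ∑ t, v a' * ((1/2) * (gd s t a' + gd a' t s - gd t s a')) * v t * v s := by
      intro s a'
      rw [Finset.mul_sum, Finset.sum_mul]
      exact Finset.sum_congr rfl fun t _ => by ring
    have hstep : ∀ s, (∑ a', ∑ bb, v a' * Γ bb s a' * P2 bb) * v s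
        = (b * c^2 * vl k / N^2 - a * c * vl k / N^3)
            * (∑ a', ∑ t, v a' * ((1/2) * (gd s t a' + gd a' t s - gd t s a')) * v t * v s)
          + (a * c / N) * (∑ a', v a' * ((1/2) * (gd s k a' + gd a' k s - gd k s a')) * v s) := by
      intro s
      rw [Finset.sum_congr rfl fun a' _ => hinner s a', Finset.sum_mul,
        Finset.mul_sum, Finset.mul_sum, ← Finset.sum_add_distrib]
      refine Finset.sum_congr rfl fun a' _ => ?_
      rw [← hpull s a']
      ring
    rw [Finset.sum_congr rfl fun s _ => hstep s, Finset.sum_add_distrib,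
      ← Finset.mul_sum, ← Finset.mul_sum, hJ4, hJ5]
  -- term S3
  have hS3 : (∑ s, (∑ bb, Γ bb s k * P1 bb) * v s) = (a * c / N) * (Qd k / 2) := by
    have h1 : ∀ s, (∑ bb, Γ bb s k * P1 bb) = (a * c / N) * (∑ t, (1/2) * (gd s t k + gd k t s - gd t s k) * v t) := by
      intro s
      have h2 : ∀ bb, Γ bb s k * P1 bb = (a * c / N) * (Γ bb s k * vl bb) := by
        intro bb; rw [hP1]; ring
      rw [Finset.sum_congr rfl fun bb _ => h2 bb, ← Finset.mul_sum, hGamvl]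
    rw [Finset.sum_congr rfl fun s _ => by rw [h1 s]]
    have h3 : ∀ s, (a * c / N) * (∑ t, (1/2) * (gd s t k + gd k t s - gd t s k) * v t) * v s
        = (a * c / N) * ((∑ t, (1/2) * (gd s t k + gd k t s - gd t s k) * v t) * v s) :=
      fun s => by ring
    rw [Finset.sum_congr rfl fun s _ => h3 s, ← Finset.mul_sum, hJ6]
  -- term T3 inner
  have hT3 : (∑ a', ∑ bb, v a' * Γ bb k a' * P1 bb) = (a * c / N) * (Qd k / 2) := by
    have h1 : ∀ a', (∑ bb, v a' * Γ bb k a' * P1 bb)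
        = (a * c / N) * (v a' * ∑ t, (1/2) * (gd k t a' + gd a' t k - gd t k a') * v t) := by
      intro a'
      have h2 : ∀ bb, v a' * Γ bb k a' * P1 bb = (a * c / N) * v a' * (Γ bb k a' * vl bb) := by
        intro bb; rw [hP1]; ring
      rw [Finset.sum_congr rfl fun bb _ => h2 bb, ← Finset.mul_sum, hGamvl]
      ring
    rw [Finset.sum_congr rfl fun a' _ => h1 a', ← Finset.mul_sum]
    have h4 : ∀ a', v a' * (∑ t, (1/2) * (gd k t a' + gd a' t k - gd t k a') * v t)
        = ∑ t, v a' * ((1/2) * (gd k t a' + gd a' t k - gd t k a')) * v t := by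
      intro a'; rw [Finset.mul_sum]
      exact Finset.sum_congr rfl fun t _ => by ring
    rw [Finset.sum_congr rfl fun a' _ => h4 a', hJ7]
  -- assemble
  have hsplit : (∑ s, (PX s - (∑ a', ∑ bb, v a' * Γ bb s a' * P2 bb)
        - (∑ bb, Γ bb s k * P1 bb)) * v s)
      = (∑ s, PX s * v s) - (∑ s, (∑ a', ∑ bb, v a' * Γ bb s a' * P2 bb) * v s)
        - (∑ s, (∑ bb, Γ bb s k * P1 bb) * v s) := by
    simp only [sub_mul, Finset.sum_sub_distrib]
  rw [hsplit, hT1, hS1, hS2, hS3, hXL, hT3, hFv k]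
  have hN3 : N ^ 3 ≠ 0 := pow_ne_zero 3 hN0
  field_simp
  ring

set_option maxHeartbeats 1000000 in
lemma NSalgebra {n : ℕ} (v : Vec n) (gd : Fin n → Fin n → Fin n → ℝ)
    (fq vl Qd : Fin n → ℝ) (E : Fin n → Fin n → ℝ) (N c : ℝ) (r : Fin n)
    (Γ : Fin n → Fin n → Fin n → ℝ) (GI : Matrix (Fin n) (Fin n) ℝ)
    (PW XW SW : Fin n → ℝ) (Fr : ℝ)
    (hgdsym : ∀ q i j, gd q i j = gd q j i)
    (hN0 : N ≠ 0) (hc0 : c ≠ 0)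
    (hQd : ∀ q, Qd q = ∑ i, ∑ j, gd q i j * v i * v j)
    (hE : ∀ q t, E q t = ∑ j, gd q t j * v j)
    (hGamvl : ∀ q a', (∑ bb, Γ bb q a' * vl bb)
      = ∑ t, (1/2) * (gd q t a' + gd a' t q - gd t q a') * v t)
    (hPW : ∀ bb, PW bb = vl bb / N * c)
    (hXW : ∀ s, XW s = Qd s / (2 * N) * c + N * (c * -(fq s)))
    (hSW : ∀ s, SW s = XW s - ∑ a', ∑ bb, v a' * Γ bb s a' * PW bb)
    (hFr : Fr = -(N ^ 2) * fq r + 2 * (∑ s, fq s * v s) * vl r) :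
    Fr = -N * ∑ s, (SW s / c) * (2 * v s * vl r / N ^ 2 - if s = r then 1 else 0) := by
  have hJ7 : ∀ kk, (∑ a', ∑ t, v a' * ((1/2) * (gd kk t a' + gd a' t kk - gd t kk a')) * v t)
      = Qd kk / 2 := by
    intro kk
    have h1 : ∀ a' t, v a' * ((1/2) * (gd kk t a' + gd a' t kk - gd t kk a')) * v t
        = (1/2) * (gd kk t a' * v t * v a') + (1/2) * (v a' * gd a' t kk * v t)
          - (1/2) * (v a' * gd t kk a' * v t) := fun a' t => by ring
    simp only [h1, Finset.sum_add_distrib, Finset.sum_sub_distrib, ← Finset.mul_sum]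
    have e1 : (∑ a', ∑ t, gd kk t a' * v t * v a') = Qd kk := by
      rw [Finset.sum_comm, hQd]
    have e2 : (∑ a', ∑ t, v a' * gd a' t kk * v t) = ∑ a', E a' kk * v a' := by
      refine Finset.sum_congr rfl fun a' _ => ?_
      rw [hE, Finset.sum_mul]
      exact Finset.sum_congr rfl fun t _ => by rw [hgdsym a' t kk]; ring
    have e3 : (∑ a', ∑ t, v a' * gd t kk a' * v t) = ∑ a', E a' kk * v a' := by
      rw [Finset.sum_comm]
      refine Finset.sum_congr rfl fun t _ => ?_
      rw [hE, Finset.sum_mul]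
      exact Finset.sum_congr rfl fun a' _ => by ring
    rw [e1, e2, e3]; ring
  have hSW0 : ∀ s, SW s = -(c * N * fq s) := by
    intro s
    have hin : ∀ a', (∑ bb, v a' * Γ bb s a' * PW bb)
        = (c / N) * (v a' * ∑ t, (1/2) * (gd s t a' + gd a' t s - gd t s a') * v t) := by
      intro a'
      have h2 : ∀ bb, v a' * Γ bb s a' * PW bb = (c / N) * v a' * (Γ bb s a' * vl bb) := by
        intro bb; rw [hPW]; ring
      rw [Finset.sum_congr rfl fun bb _ => h2 bb, ← Finset.mul_sum, hGamvl]
      ring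
    have hin2 : ∀ a', v a' * (∑ t, (1/2) * (gd s t a' + gd a' t s - gd t s a') * v t)
        = ∑ t, v a' * ((1/2) * (gd s t a' + gd a' t s - gd t s a')) * v t := by
      intro a'; rw [Finset.mul_sum]
      exact Finset.sum_congr rfl fun t _ => by ring
    rw [hSW, hXW, Finset.sum_congr rfl fun a' _ => hin a', ← Finset.mul_sum,
      Finset.sum_congr rfl fun a' _ => hin2 a', hJ7 s]
    field_simp
    ring
  have hsum : ∀ s, (SW s / c) * (2 * v s * vl r / N ^ 2 - if s = r then 1 else 0)
      = (-(2 * vl r / N)) * (fq s * v s) - (if s = r then -(N * fq s) else 0) := by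
    intro s
    rw [hSW0]
    rcases eq_or_ne s r with h | h <;> simp [h] <;> field_simp <;> ring
  rw [Finset.sum_congr rfl fun s _ => hsum s, Finset.sum_sub_distrib, ← Finset.mul_sum,
    Finset.sum_ite_eq' Finset.univ r (fun s => -(N * fq s)), hFr]
  simp only [Finset.mem_univ, if_true]
  field_simp
  ring

set_option maxHeartbeats 4000000 in
/-- For any smooth `f : U → ℝ` and smooth `φ : (0,∞) → ℝ` with `φ′ ≠ 0`,
`φ″ ≠ 0`, the Lagrangian `L(x,v) = φ(e^{−f(x)}·|v|)` satisfies `L′ ≠ 0`, `L″ ≠ 0`, its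
Euler–Lagrange force field is `F_r = −|v|²·∂f/∂x^r + 2(Σ_s ∂f/∂x^s v^s)·v_r`, and this `F`
equals the normal-shift form (8.10) with `W(x,v) = |v|·e^{−f(x)}`. -/
theorem stmt_1 {n : ℕ} (U : Set (Vec n)) (hU : IsOpen U)
    (g : Vec n → Matrix (Fin n) (Fin n) ℝ)
    (hgsmooth : ∀ i j, ContDiffOn ℝ ∞ (fun x => g x i j) U)
    (hgpos : ∀ x ∈ U, (g x).PosDef)
    (f : Vec n → ℝ) (hf : ContDiffOn ℝ ∞ f U)
    (φ : ℝ → ℝ) (hφ : ContDiffOn ℝ ∞ φ (Ioi (0:ℝ)))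
    (hφ' : ∀ w : ℝ, 0 < w → deriv φ w ≠ 0)
    (hφ'' : ∀ w : ℝ, 0 < w → deriv (deriv φ) w ≠ 0)
    (L : Vec n × Vec n → ℝ)
    (hL : ∀ p : Vec n × Vec n, L p = φ (Real.exp (-(f p.1)) * nrm g p.1 p.2))
    (F : Fin n → Vec n × Vec n → ℝ)
    (hF : ∀ r, ∀ p : Vec n × Vec n, F r p =
      -(nrm g p.1 p.2) ^ 2 * fderiv ℝ f p.1 (Pi.single r 1)
        + 2 * (∑ s, fderiv ℝ f p.1 (Pi.single s 1) * p.2 s) * lower g p.1 p.2 r)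
    (W : Vec n × Vec n → ℝ)
    (hW : ∀ p : Vec n × Vec n, W p = nrm g p.1 p.2 * Real.exp (-(f p.1))) :
    ∀ x ∈ U, ∀ v : Vec n, v ≠ 0 →
      -- `L′ ≠ 0` and `L″ ≠ 0` for the fiberwise spherically symmetric Lagrangian
      (deriv (fun w => φ (Real.exp (-(f x)) * w)) (nrm g x v) ≠ 0) ∧
      (deriv (deriv (fun w => φ (Real.exp (-(f x)) * w))) (nrm g x v) ≠ 0) ∧
      -- `F` solves the Euler–Lagrange force-field equation
      (∀ k : Fin n,
        (∑ s, pdv (pdv L k) s (x, v) * (∑ r, (g x)⁻¹ s r * F r (x, v)))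
            + (∑ s, sgradCov g (fun i => pdv L i) s k (x, v) * v s)
            - sgrad g L k (x, v) = 0) ∧
      -- `F` coincides with the normal-shift form (8.10) with `W = |v|·e^{−f}`
      (∀ r : Fin n,
        F r (x, v) =
          -(nrm g x v) * ∑ s, (sgrad g W s (x, v)
                / deriv (fun w => w * Real.exp (-(f x))) (nrm g x v))
              * (2 * v s * lower g x v r / (nrm g x v) ^ 2
                  - if s = r then 1 else 0)) := by
  intro x hx v hv
  -- symmetry of the metric
  have hsymU : ∀ y ∈ U, ∀ i j, g y i j = g y j i := fun y hy i j => by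
    simpa using ((hgpos y hy).1.apply i j).symm
  -- positivity of the quadratic form
  have hQpos : 0 < Qf g (x, v) := by
    have h := (hgpos x hx).dotProduct_mulVec_pos hv
    have h2 : dotProduct (star v) ((g x).mulVec v) = Qf g (x, v) := by
      simp only [star_trivial, dotProduct, Matrix.mulVec, Qf, Finset.mul_sum]
      exact Finset.sum_congr rfl fun i _ => Finset.sum_congr rfl fun j _ => by ring
    rwa [h2] at h
  have hN : nrm g x v = Real.sqrt (Qf g (x, v)) := rfl
  have hNpos : 0 < nrm g x v := by rw [hN]; exact Real.sqrt_pos.2 hQpos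
  have hN0 : nrm g x v ≠ 0 := ne_of_gt hNpos
  have hc0 : Real.exp (-(f x)) ≠ 0 := (Real.exp_pos _).ne'
  have hupos : 0 < Real.exp (-(f x)) * nrm g x v := mul_pos (Real.exp_pos _) hNpos
  have hφ1 : ContDiffOn ℝ ∞ (deriv φ) (Ioi (0:ℝ)) :=
    hφ.deriv_of_isOpen isOpen_Ioi (by norm_num)
  have hφAt : ∀ w : ℝ, 0 < w → HasDerivAt φ (deriv φ w) w := fun w hw =>
    ((hφ.contDiffAt (isOpen_Ioi.mem_nhds hw)).differentiableAt (by norm_num)).hasDerivAt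
  have hφ'At : ∀ w : ℝ, 0 < w → HasDerivAt (deriv φ) (deriv (deriv φ) w) w := fun w hw =>
    ((hφ1.contDiffAt (isOpen_Ioi.mem_nhds hw)).differentiableAt (by norm_num)).hasDerivAt
  have hlin : ∀ w : ℝ, HasDerivAt (fun t : ℝ => Real.exp (-(f x)) * t)
      (Real.exp (-(f x))) w := fun w => by
    simpa using (hasDerivAt_id w).const_mul (Real.exp (-(f x)))
  have hcomp : ∀ w : ℝ, 0 < w → HasDerivAt (fun t => φ (Real.exp (-(f x)) * t))
      (deriv φ (Real.exp (-(f x)) * w) * Real.exp (-(f x))) w := fun w hw =>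
    (hφAt _ (mul_pos (Real.exp_pos _) hw)).comp w (hlin w)
  have part1 : deriv (fun w => φ (Real.exp (-(f x)) * w)) (nrm g x v) ≠ 0 := by
    rw [(hcomp _ hNpos).deriv]
    exact mul_ne_zero (hφ' _ hupos) hc0
  have part2 : deriv (deriv (fun w => φ (Real.exp (-(f x)) * w))) (nrm g x v) ≠ 0 := by
    have hev : (deriv (fun w => φ (Real.exp (-(f x)) * w))) =ᶠ[𝓝 (nrm g x v)]
        (fun w => deriv φ (Real.exp (-(f x)) * w) * Real.exp (-(f x))) :=
      (isOpen_Ioi.eventually_mem hNpos).mono fun w hw => (hcomp w hw).deriv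
    rw [hev.deriv_eq]
    have h2 : HasDerivAt (fun w => deriv φ (Real.exp (-(f x)) * w) * Real.exp (-(f x)))
        (deriv (deriv φ) (Real.exp (-(f x)) * nrm g x v) * Real.exp (-(f x))
          * Real.exp (-(f x))) (nrm g x v) :=
      ((hφ'At _ hupos).comp _ (hlin _)).mul_const _
    rw [h2.deriv]
    exact mul_ne_zero (mul_ne_zero (hφ'' _ hupos) hc0) hc0
  -- metric inverse facts
  have hdet : IsUnit (g x).det := isUnit_iff_ne_zero.2 (ne_of_gt (hgpos x hx).det_pos)
  have hdelta : ∀ t l, (∑ bb, g x t bb * (g x)⁻¹ bb l) = if t = l then 1 else 0 := by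
    intro t l
    have h2 : (g x * (g x)⁻¹) t l = (1 : Matrix (Fin n) (Fin n) ℝ) t l := by
      rw [Matrix.mul_nonsing_inv (g x) hdet]
    rw [← Matrix.mul_apply, h2, Matrix.one_apply]
  have hgdsym : ∀ q i j, fderiv ℝ (fun y => g y i j) x (Pi.single q 1)
      = fderiv ℝ (fun y => g y j i) x (Pi.single q 1) := by
    intro q i j
    have hev : (fun y => g y i j) =ᶠ[𝓝 x] (fun y => g y j i) :=
      (hU.eventually_mem hx).mono fun y hy => hsymU y hy i j
    rw [hev.fderiv_eq]
  have hmemΩ : (x, v) ∈ {q : Vec n × Vec n | q.1 ∈ U ∧ 0 < Qf g q} := ⟨hx, hQpos⟩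
  have hΩ : IsOpen {q : Vec n × Vec n | q.1 ∈ U ∧ 0 < Qf g q} := OmegaOpen hU hgsmooth
  have hLf : L = fun q : Vec n × Vec n => φ (Real.exp (-(f q.1)) * Real.sqrt (Qf g q)) :=
    funext fun q => hL q
  have hWf : W = fun q : Vec n × Vec n => Real.sqrt (Qf g q) * Real.exp (-(f q.1)) :=
    funext fun q => hW q
  have hNsq : (nrm g x v) ^ 2 = ∑ r, v r * lower g x v r := by
    rw [hN, Real.sq_sqrt hQpos.le]
    refine Finset.sum_congr rfl fun i _ => ?_
    rw [lower, Finset.mul_sum]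
    exact Finset.sum_congr rfl fun j _ => by ring
  -- closed form of `pdv L` on the good set
  have hYeq : ∀ bb : Fin n, ∀ q ∈ {p : Vec n × Vec n | p.1 ∈ U ∧ 0 < Qf g p},
      pdv L bb q = deriv φ (Real.exp (-(f q.1)) * Real.sqrt (Qf g q)) *
        (Real.exp (-(f q.1)) * (lower g q.1 q.2 bb * (Real.sqrt (Qf g q))⁻¹)) := by
    rintro bb q ⟨hq1, hq2⟩
    obtain ⟨D, hD, hDv⟩ := Lder hU hgsmooth hf hφ q hq1 hq2
    have hDf : fderiv ℝ L q = D := by rw [hLf]; exact hD.fderiv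
    have hs0 : Real.sqrt (Qf g q) ≠ 0 := ne_of_gt (Real.sqrt_pos.2 hq2)
    rw [pdv, hDf, hDv, DQval_single_v q (hsymU q.1 hq1) bb]
    dsimp only
    rw [map_zero]
    field_simp
    ring
  have hEqF : ∀ bb : Fin n, pdv L bb =ᶠ[𝓝 (x, v)]
      (fun q => deriv φ (Real.exp (-(f q.1)) * Real.sqrt (Qf g q)) *
        (Real.exp (-(f q.1)) * (lower g q.1 q.2 bb * (Real.sqrt (Qf g q))⁻¹))) := fun bb =>
    (hΩ.eventually_mem hmemΩ).mono fun q hq => hYeq bb q hq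
  -- first-order closed forms at the point
  have hP1 : ∀ bb, pdv L bb (x, v)
      = deriv φ (Real.exp (-(f x)) * nrm g x v) * Real.exp (-(f x))
          * lower g x v bb / nrm g x v := by
    intro bb
    rw [hYeq bb (x, v) hmemΩ]
    dsimp only
    rw [← hN]
    field_simp
  have hXL : ∀ kk, pdx L kk (x, v)
      = deriv φ (Real.exp (-(f x)) * nrm g x v) *
          (Real.exp (-(f x)) * ((∑ i, ∑ j, fderiv ℝ (fun y => g y i j) x (Pi.single kk 1)
              * v i * v j) / (2 * nrm g x v))
            - Real.exp (-(f x)) * fderiv ℝ f x (Pi.single kk 1) * nrm g x v) := by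
    intro kk
    obtain ⟨D, hD, hDv⟩ := Lder hU hgsmooth hf hφ (x, v) hx hQpos
    have hDf : fderiv ℝ L (x, v) = D := by rw [hLf]; exact hD.fderiv
    rw [pdx, hDf, hDv, DQval_single_x (x, v) kk]
    dsimp only
    rw [← hN]
    ring
  -- second-order closed forms at the point
  have hP2 : ∀ kk s, pdv (pdv L kk) s (x, v)
      = deriv (deriv φ) (Real.exp (-(f x)) * nrm g x v) * Real.exp (-(f x)) ^ 2
            * lower g x v s * lower g x v kk / (nrm g x v) ^ 2
        + deriv φ (Real.exp (-(f x)) * nrm g x v) * Real.exp (-(f x)) * g x kk s / nrm g x v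
        - deriv φ (Real.exp (-(f x)) * nrm g x v) * Real.exp (-(f x)) * lower g x v kk
            * lower g x v s / (nrm g x v) ^ 3 := by
    intro kk s
    obtain ⟨DY, hDY, hDYv⟩ := Yder hU hgsmooth hf hφ1 kk (x, v) hx hQpos
    have hDf : fderiv ℝ (pdv L kk) (x, v) = DY := by
      rw [(hEqF kk).fderiv_eq]; exact hDY.fderiv
    rw [pdv, hDf, hDYv, DQval_single_v (x, v) (hsymU x hx) s,
      Dlowval_single_v (x, v) kk s]
    dsimp only
    rw [map_zero, ← hN]
    have hs0 : nrm g x v ≠ 0 := hN0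
    generalize hSS : nrm g x v = S at hs0 ⊢
    field_simp
    ring
  have hPX : ∀ kk q, pdx (pdv L kk) q (x, v)
      = deriv (deriv φ) (Real.exp (-(f x)) * nrm g x v)
          * (Real.exp (-(f x)) * ((∑ i, ∑ j, fderiv ℝ (fun y => g y i j) x (Pi.single q 1)
                * v i * v j) / (2 * nrm g x v))
             - Real.exp (-(f x)) * fderiv ℝ f x (Pi.single q 1) * nrm g x v)
          * (Real.exp (-(f x)) * lower g x v kk / nrm g x v)
        + deriv φ (Real.exp (-(f x)) * nrm g x v)
          * (Real.exp (-(f x)) * (∑ j, fderiv ℝ (fun y => g y kk j) x (Pi.single q 1) * v j)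
                / nrm g x v
            - Real.exp (-(f x)) * fderiv ℝ f x (Pi.single q 1) * lower g x v kk / nrm g x v
            - Real.exp (-(f x)) * lower g x v kk
                * (∑ i, ∑ j, fderiv ℝ (fun y => g y i j) x (Pi.single q 1) * v i * v j)
                / (2 * (nrm g x v) ^ 3)) := by
    intro kk q
    obtain ⟨DY, hDY, hDYv⟩ := Yder hU hgsmooth hf hφ1 kk (x, v) hx hQpos
    have hDf : fderiv ℝ (pdv L kk) (x, v) = DY := by
      rw [(hEqF kk).fderiv_eq]; exact hDY.fderiv
    rw [pdx, hDf, hDYv, DQval_single_x (x, v) q, Dlowval_single_x (x, v) kk q]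
    dsimp only
    rw [← hN]
    have hs0 : nrm g x v ≠ 0 := hN0
    generalize hSS : nrm g x v = S at hs0 ⊢
    field_simp
    ring
  refine ⟨part1, part2, ?_, ?_⟩
  · -- Euler–Lagrange equation
    intro k
    have hgoal := ELalgebra v (g x) (g x)⁻¹
      (fun q i j => fderiv ℝ (fun y => g y i j) x (Pi.single q 1))
      (fun r => fderiv ℝ f x (Pi.single r 1))
      (fun t => lower g x v t)
      (fun q => ∑ i, ∑ j, fderiv ℝ (fun y => g y i j) x (Pi.single q 1) * v i * v j)
      (fun q t => ∑ j, fderiv ℝ (fun y => g y t j) x (Pi.single q 1) * v j)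
      (nrm g x v) (Real.exp (-(f x)))
      (deriv φ (Real.exp (-(f x)) * nrm g x v))
      (deriv (deriv φ) (Real.exp (-(f x)) * nrm g x v)) k
      (fun bb q a' => Christoffel g bb q a' x)
      (fun bb => pdv L bb (x, v))
      (fun s => pdv (pdv L k) s (x, v))
      (fun q => pdx (pdv L k) q (x, v))
      (fun r => F r (x, v))
      (pdx L k (x, v))
      (hsymU x hx) hgdsym hdelta hN0 (fun t => rfl) (fun q => rfl) (fun q t => rfl)
      hNsq (fun bb q a' => rfl) (fun r => hF r (x, v))
      (fun bb => by show pdv L bb (x, v) = _; rw [hP1 bb])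
      (fun s => by show pdv (pdv L k) s (x, v) = _; rw [hP2 k s])
      (fun q => by show pdx (pdv L k) q (x, v) = _; rw [hPX k q])
      (by rw [hXL k]; ring)
    simp only [sgradCov, sgrad]
    exact hgoal
  · -- normal-shift form
    intro r
    have hder : deriv (fun w => w * Real.exp (-(f x))) (nrm g x v) = Real.exp (-(f x)) :=
      (hasDerivAt_mul_const _).deriv
    rw [hder]
    obtain ⟨DW, hDW, hDWv⟩ := Wder hU hgsmooth hf (x, v) hx hQpos
    have hWfd : fderiv ℝ W (x, v) = DW := by rw [hWf]; exact hDW.fderiv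
    have hXW : ∀ s, pdx W s (x, v)
        = (∑ i, ∑ j, fderiv ℝ (fun y => g y i j) x (Pi.single s 1) * v i * v j)
            / (2 * nrm g x v) * Real.exp (-(f x))
          + nrm g x v * (Real.exp (-(f x)) * -(fderiv ℝ f x (Pi.single s 1))) := by
      intro s
      rw [pdx, hWfd, hDWv, DQval_single_x (x, v) s]
      dsimp only
      rw [← hN]
    have hPW : ∀ bb, pdv W bb (x, v)
        = lower g x v bb / nrm g x v * Real.exp (-(f x)) := by
      intro bb
      rw [pdv, hWfd, hDWv, DQval_single_v (x, v) (hsymU x hx) bb]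
      dsimp only
      rw [map_zero, ← hN]
      field_simp
      ring
    have hgoal := NSalgebra v
      (fun q i j => fderiv ℝ (fun y => g y i j) x (Pi.single q 1))
      (fun r' => fderiv ℝ f x (Pi.single r' 1))
      (fun t => lower g x v t)
      (fun q => ∑ i, ∑ j, fderiv ℝ (fun y => g y i j) x (Pi.single q 1) * v i * v j)
      (fun q t => ∑ j, fderiv ℝ (fun y => g y t j) x (Pi.single q 1) * v j)
      (nrm g x v) (Real.exp (-(f x))) r
      (fun bb q a' => Christoffel g bb q a' x) (g x)⁻¹
      (fun bb => pdv W bb (x, v))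
      (fun s => pdx W s (x, v))
      (fun s => sgrad g W s (x, v))
      (F r (x, v))
      hgdsym hN0 hc0 (fun q => rfl) (fun q t => rfl)
      (Gamvl v (g x) (g x)⁻¹
        (fun q i j => fderiv ℝ (fun y => g y i j) x (Pi.single q 1))
        (fun t => lower g x v t)
        (fun bb q a' => Christoffel g bb q a' x)
        (hsymU x hx) hdelta (fun t => rfl) (fun bb q a' => rfl))
      (fun bb => hPW bb)
      (fun s => by show pdx W s (x, v) = _; rw [hXW s])
      (fun s => rfl)
      (hF r (x, v))
    exact hgoal
end EL
end
end

section
/- Let f : U → ℝ be smooth and define the extended force field F^k(x,v) = Σ_r g^{kr}(x) F_r with F_r = −|v|²·∂f/∂x^r + 2·(Σ_s (∂f/∂x^s) v^s)·v_r. Then a C² curve t ↦ x(t) in U satisfies the Newtonian equations ∇_t v^k = F^k(x(t),ẋ(t)) (with v(t) = ẋ(t)) if and only if it is a geodesic of the conformally equivalent metric g̃ = e^{−2f}·g, i.e. ẍ^k + Σ_{i,j} Γ̃^k_{ij}(x(t)) ẋ^i ẋ^j = 0 for all k, where Γ̃^k_{ij} are the Christoffel symbols of g̃. -/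
open Real Set
open scoped ContDiff

noncomputable section

lemma diffAt_of_smoothOn {n : ℕ} {U : Set (Vec n)} (hU : IsOpen U) {h : Vec n → ℝ}
    (hh : ContDiffOn ℝ ∞ h U) {x : Vec n} (hx : x ∈ U) : DifferentiableAt ℝ h x :=
  (hh.contDiffAt (hU.mem_nhds hx)).differentiableAt (by simp)

lemma fderiv_exp_neg2f {n : ℕ} {U : Set (Vec n)} (hU : IsOpen U) {f : Vec n → ℝ}
    (hf : ContDiffOn ℝ ∞ f U) {x : Vec n} (hx : x ∈ U) (w : Vec n) :
    fderiv ℝ (fun y => Real.exp (-2 * f y)) x w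
      = Real.exp (-2 * f x) * (-2 * fderiv ℝ f x w) := by
  have hfd : DifferentiableAt ℝ f x := diffAt_of_smoothOn hU hf hx
  have h1 : HasFDerivAt (fun y => Real.exp (-2 * f y))
      (Real.exp (-2 * f x) • ((-2 : ℝ) • fderiv ℝ f x)) x := by
    have := (hfd.hasFDerivAt.const_mul (-2)).exp
    exact this
  rw [h1.fderiv]
  simp [mul_comm]

lemma fderiv_gt_entry {n : ℕ} {U : Set (Vec n)} (hU : IsOpen U)
    {g gt : Vec n → Matrix (Fin n) (Fin n) ℝ}
    (hgsmooth : ∀ i j, ContDiffOn ℝ ∞ (fun x => g x i j) U)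
    {f : Vec n → ℝ} (hf : ContDiffOn ℝ ∞ f U)
    (hgt : ∀ x, gt x = Matrix.of fun i j => Real.exp (-2 * f x) * g x i j)
    {x : Vec n} (hx : x ∈ U) (l j : Fin n) (w : Vec n) :
    fderiv ℝ (fun y => gt y l j) x w
      = Real.exp (-2 * f x) * (-2 * fderiv ℝ f x w * g x l j
          + fderiv ℝ (fun y => g y l j) x w) := by
  have heq : (fun y => gt y l j) = fun y => Real.exp (-2 * f y) * g y l j := by
    funext y; rw [hgt]; rfl
  rw [heq]
  have hfd : DifferentiableAt ℝ f x := diffAt_of_smoothOn hU hf hx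
  have hgd : DifferentiableAt ℝ (fun y => g y l j) x :=
    diffAt_of_smoothOn hU (hgsmooth l j) hx
  have hed : DifferentiableAt ℝ (fun y => Real.exp (-2 * f y)) x := by
    exact (Real.differentiable_exp.differentiableAt).comp x (hfd.const_mul (-2))
  rw [fderiv_fun_mul hed hgd]
  simp only [ContinuousLinearMap.add_apply, ContinuousLinearMap.smul_apply, smul_eq_mul]
  rw [fderiv_exp_neg2f hU hf hx]
  ring

lemma gt_inv_entry {n : ℕ} {U : Set (Vec n)}
    {g gt : Vec n → Matrix (Fin n) (Fin n) ℝ}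
    (hgpos : ∀ x ∈ U, (g x).PosDef)
    {f : Vec n → ℝ}
    (hgt : ∀ x, gt x = Matrix.of fun i j => Real.exp (-2 * f x) * g x i j)
    {x : Vec n} (hx : x ∈ U) (k l : Fin n) :
    (gt x)⁻¹ k l = Real.exp (2 * f x) * (g x)⁻¹ k l := by
  have hdet : IsUnit (g x).det := (hgpos x hx).det_pos.ne'.isUnit
  have hc : gt x = Real.exp (-2 * f x) • g x := by
    ext i j; rw [hgt]; simp
  have : (gt x)⁻¹ = Real.exp (2 * f x) • (g x)⁻¹ := by
    apply Matrix.inv_eq_right_inv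
    rw [hc, Matrix.smul_mul, Matrix.mul_smul, Matrix.mul_nonsing_inv _ hdet, smul_smul,
      ← Real.exp_add]
    norm_num
  rw [this]; simp

lemma christoffel_conformal {n : ℕ} {U : Set (Vec n)} (hU : IsOpen U)
    {g gt : Vec n → Matrix (Fin n) (Fin n) ℝ}
    (hgsmooth : ∀ i j, ContDiffOn ℝ ∞ (fun x => g x i j) U)
    (hgpos : ∀ x ∈ U, (g x).PosDef)
    {f : Vec n → ℝ} (hf : ContDiffOn ℝ ∞ f U)
    (hgt : ∀ x, gt x = Matrix.of fun i j => Real.exp (-2 * f x) * g x i j)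
    {x : Vec n} (hx : x ∈ U) (k i j : Fin n) :
    Christoffel gt k i j x = Christoffel g k i j x
      - (if k = j then fderiv ℝ f x (Pi.single i 1) else 0)
      - (if k = i then fderiv ℝ f x (Pi.single j 1) else 0)
      + g x i j * ∑ l, (g x)⁻¹ k l * fderiv ℝ f x (Pi.single l 1) := by
  have hdet : IsUnit (g x).det := (hgpos x hx).det_pos.ne'.isUnit
  have hδ : ∀ a b : Fin n, (∑ l, (g x)⁻¹ a l * g x l b) = if a = b then 1 else 0 := by
    intro a b
    rw [← Matrix.mul_apply, Matrix.nonsing_inv_mul _ hdet, Matrix.one_apply]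
  have hterm : ∀ l, (gt x)⁻¹ k l *
      (fderiv ℝ (fun y => gt y l j) x (Pi.single i 1)
        + fderiv ℝ (fun y => gt y l i) x (Pi.single j 1)
        - fderiv ℝ (fun y => gt y i j) x (Pi.single l 1))
      = (g x)⁻¹ k l *
        (fderiv ℝ (fun y => g y l j) x (Pi.single i 1)
          + fderiv ℝ (fun y => g y l i) x (Pi.single j 1)
          - fderiv ℝ (fun y => g y i j) x (Pi.single l 1))
        + ((-2 * fderiv ℝ f x (Pi.single i 1)) * ((g x)⁻¹ k l * g x l j)
          + (-2 * fderiv ℝ f x (Pi.single j 1)) * ((g x)⁻¹ k l * g x l i)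
          + (2 * fderiv ℝ f x (Pi.single l 1)) * ((g x)⁻¹ k l * g x i j)) := by
    intro l
    rw [gt_inv_entry hgpos hgt hx,
      fderiv_gt_entry hU hgsmooth hf hgt hx,
      fderiv_gt_entry hU hgsmooth hf hgt hx,
      fderiv_gt_entry hU hgsmooth hf hgt hx]
    have hee : Real.exp (2 * f x) * Real.exp (-2 * f x) = 1 := by
      rw [← Real.exp_add]; norm_num
    calc Real.exp (2 * f x) * (g x)⁻¹ k l *
        (Real.exp (-2 * f x) * (-2 * fderiv ℝ f x (Pi.single i 1) * g x l j
            + fderiv ℝ (fun y => g y l j) x (Pi.single i 1))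
          + Real.exp (-2 * f x) * (-2 * fderiv ℝ f x (Pi.single j 1) * g x l i
            + fderiv ℝ (fun y => g y l i) x (Pi.single j 1))
          - Real.exp (-2 * f x) * (-2 * fderiv ℝ f x (Pi.single l 1) * g x i j
            + fderiv ℝ (fun y => g y i j) x (Pi.single l 1)))
        = (Real.exp (2 * f x) * Real.exp (-2 * f x)) * ((g x)⁻¹ k l *
            ((-2 * fderiv ℝ f x (Pi.single i 1) * g x l j
              + fderiv ℝ (fun y => g y l j) x (Pi.single i 1))
            + (-2 * fderiv ℝ f x (Pi.single j 1) * g x l i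
              + fderiv ℝ (fun y => g y l i) x (Pi.single j 1))
            - (-2 * fderiv ℝ f x (Pi.single l 1) * g x i j
              + fderiv ℝ (fun y => g y i j) x (Pi.single l 1)))) := by ring
      _ = _ := by rw [hee]; ring
  have expand : Christoffel gt k i j x = (1/2) * ∑ l, (gt x)⁻¹ k l *
      (fderiv ℝ (fun y => gt y l j) x (Pi.single i 1)
        + fderiv ℝ (fun y => gt y l i) x (Pi.single j 1)
        - fderiv ℝ (fun y => gt y i j) x (Pi.single l 1)) := rfl
  have hC : Christoffel g k i j x = (1/2) * ∑ l, (g x)⁻¹ k l *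
      (fderiv ℝ (fun y => g y l j) x (Pi.single i 1)
        + fderiv ℝ (fun y => g y l i) x (Pi.single j 1)
        - fderiv ℝ (fun y => g y i j) x (Pi.single l 1)) := rfl
  have h2 : (∑ l, (2 * fderiv ℝ f x (Pi.single l 1)) * ((g x)⁻¹ k l * g x i j))
      = 2 * g x i j * ∑ l, (g x)⁻¹ k l * fderiv ℝ f x (Pi.single l 1) := by
    rw [Finset.mul_sum]
    exact Finset.sum_congr rfl fun l _ => by ring
  rw [expand, Finset.sum_congr rfl (fun l _ => hterm l), Finset.sum_add_distrib, mul_add, ← hC,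
    Finset.sum_add_distrib, Finset.sum_add_distrib, ← Finset.mul_sum, ← Finset.mul_sum, hδ, hδ,
    h2]
  split_ifs <;> ring

lemma nrm_sq {n : ℕ} {U : Set (Vec n)} {g : Vec n → Matrix (Fin n) (Fin n) ℝ}
    (hgpos : ∀ x ∈ U, (g x).PosDef) {x : Vec n} (hx : x ∈ U) (v : Vec n) :
    nrm g x v ^ 2 = ∑ i, ∑ j, g x i j * v i * v j := by
  apply Real.sq_sqrt
  have := (hgpos x hx).posSemidef.dotProduct_mulVec_nonneg v
  simpa [dotProduct, Matrix.mulVec, Finset.mul_sum, mul_assoc, mul_comm, mul_left_comm]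
    using this

lemma sum_helper {n : ℕ} (Γt Γ G : Fin n → Fin n → ℝ) (Dv : Fin n → ℝ) (S : ℝ)
    (v : Vec n) (k : Fin n)
    (h : ∀ i j, Γt i j = Γ i j - (if k = j then Dv i else 0) - (if k = i then Dv j else 0)
      + G i j * S) :
    ∑ i, ∑ j, Γt i j * v i * v j
      = (∑ i, ∑ j, Γ i j * v i * v j) - 2 * (∑ s, Dv s * v s) * v k
        + (∑ i, ∑ j, G i j * v i * v j) * S := by
  have h1 : ∀ i, ∑ j, Γt i j * v i * v j
      = (∑ j, Γ i j * v i * v j) - Dv i * v i * v k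
        - (if k = i then v i * ∑ s, Dv s * v s else 0)
        + (∑ j, G i j * v i * v j) * S := by
    intro i
    have e : ∀ j, Γt i j * v i * v j
        = Γ i j * v i * v j - (if k = j then Dv i * v i * v j else 0)
          - (if k = i then v i * (Dv j * v j) else 0) + (G i j * v i * v j) * S := by
      intro j; rw [h i j]; split_ifs <;> ring
    rw [Finset.sum_congr rfl fun j _ => e j, Finset.sum_add_distrib, Finset.sum_sub_distrib,
      Finset.sum_sub_distrib, ← Finset.sum_mul]
    have e2 : (∑ j, if k = j then Dv i * v i * v j else 0) = Dv i * v i * v k := by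
      simp
    have e3 : (∑ j, if k = i then v i * (Dv j * v j) else 0)
        = (if k = i then v i * ∑ s, Dv s * v s else 0) := by
      by_cases hk : k = i <;> simp [hk, Finset.mul_sum]
    rw [e2, e3]
  rw [Finset.sum_congr rfl fun i _ => h1 i, Finset.sum_add_distrib, Finset.sum_sub_distrib,
    Finset.sum_sub_distrib, ← Finset.sum_mul]
  have e4 : (∑ i, Dv i * v i * v k) = (∑ s, Dv s * v s) * v k := by
    rw [Finset.sum_mul]
  have e5 : (∑ i, if k = i then v i * ∑ s, Dv s * v s else 0)
      = v k * ∑ s, Dv s * v s := by simp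
  rw [e5, ← Finset.sum_mul]
  ring

lemma force_simp {n : ℕ} {U : Set (Vec n)}
    {g : Vec n → Matrix (Fin n) (Fin n) ℝ}
    (hgpos : ∀ x ∈ U, (g x).PosDef)
    {f : Vec n → ℝ} {x : Vec n} (hx : x ∈ U) (v : Vec n) (k : Fin n) :
    ∑ r, (g x)⁻¹ k r * (-(nrm g x v) ^ 2 * fderiv ℝ f x (Pi.single r 1)
        + 2 * (∑ s, fderiv ℝ f x (Pi.single s 1) * v s) * lower g x v r)
      = -(∑ i, ∑ j, g x i j * v i * v j)
          * (∑ l, (g x)⁻¹ k l * fderiv ℝ f x (Pi.single l 1))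
        + 2 * (∑ s, fderiv ℝ f x (Pi.single s 1) * v s) * v k := by
  have hdet : IsUnit (g x).det := (hgpos x hx).det_pos.ne'.isUnit
  have hδ : ∀ a b : Fin n, (∑ l, (g x)⁻¹ a l * g x l b) = if a = b then 1 else 0 := by
    intro a b
    rw [← Matrix.mul_apply, Matrix.nonsing_inv_mul _ hdet, Matrix.one_apply]
  simp only [nrm_sq hgpos hx]
  have step : ∀ r, (g x)⁻¹ k r * (-(∑ i, ∑ j, g x i j * v i * v j)
        * fderiv ℝ f x (Pi.single r 1)
        + 2 * (∑ s, fderiv ℝ f x (Pi.single s 1) * v s) * lower g x v r)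
      = -(∑ i, ∑ j, g x i j * v i * v j) * ((g x)⁻¹ k r * fderiv ℝ f x (Pi.single r 1))
        + ∑ s, 2 * (∑ s', fderiv ℝ f x (Pi.single s' 1) * v s') * v s
            * ((g x)⁻¹ k r * g x r s) := by
    intro r
    simp only [lower, Finset.mul_sum, mul_add]
    congr 1
    · ring
    · exact Finset.sum_congr rfl fun s _ => by ring
  rw [Finset.sum_congr rfl fun r _ => step r, Finset.sum_add_distrib, ← Finset.mul_sum]
  have swap : (∑ r, ∑ s, 2 * (∑ s', fderiv ℝ f x (Pi.single s' 1) * v s') * v s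
        * ((g x)⁻¹ k r * g x r s))
      = ∑ s, ∑ r, 2 * (∑ s', fderiv ℝ f x (Pi.single s' 1) * v s') * v s
        * ((g x)⁻¹ k r * g x r s) := Finset.sum_comm
  rw [swap]
  have step2 : ∀ s, (∑ r, 2 * (∑ s', fderiv ℝ f x (Pi.single s' 1) * v s') * v s
        * ((g x)⁻¹ k r * g x r s))
      = if k = s then 2 * (∑ s', fderiv ℝ f x (Pi.single s' 1) * v s') * v s else 0 := by
    intro s
    rw [← Finset.mul_sum, hδ]
    by_cases hk : k = s <;> simp [hk]
  rw [Finset.sum_congr rfl fun s _ => step2 s]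
  simp

lemma key_identity {n : ℕ} {U : Set (Vec n)} (hU : IsOpen U)
    {g gt : Vec n → Matrix (Fin n) (Fin n) ℝ}
    (hgsmooth : ∀ i j, ContDiffOn ℝ ∞ (fun x => g x i j) U)
    (hgpos : ∀ x ∈ U, (g x).PosDef)
    {f : Vec n → ℝ} (hf : ContDiffOn ℝ ∞ f U)
    (hgt : ∀ x, gt x = Matrix.of fun i j => Real.exp (-2 * f x) * g x i j)
    {x : Vec n} (hx : x ∈ U) (v : Vec n) (k : Fin n) :
    ∑ i, ∑ j, Christoffel gt k i j x * v i * v j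
      = (∑ i, ∑ j, Christoffel g k i j x * v i * v j)
        - ∑ r, (g x)⁻¹ k r * (-(nrm g x v) ^ 2 * fderiv ℝ f x (Pi.single r 1)
            + 2 * (∑ s, fderiv ℝ f x (Pi.single s 1) * v s) * lower g x v r) := by
  rw [force_simp hgpos hx v k,
    sum_helper (fun i j => Christoffel gt k i j x) (fun i j => Christoffel g k i j x)
      (fun i j => g x i j) (fun r => fderiv ℝ f x (Pi.single r 1))
      (∑ l, (g x)⁻¹ k l * fderiv ℝ f x (Pi.single l 1)) v k
      (fun i j => christoffel_conformal hU hgsmooth hgpos hf hgt hx k i j)]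
  ring

/-- A C² curve satisfies the Newtonian equations `∇_t v^k = F^k(x,ẋ)` for the
force field `F_r = −|v|²·∂f/∂x^r + 2(Σ_s ∂f/∂x^s v^s)·v_r` if and only if it is a geodesic of
the conformal metric `g̃ = e^{−2f}·g`. -/
theorem stmt_2 {n : ℕ} (U : Set (Vec n)) (hU : IsOpen U)
    (g : Vec n → Matrix (Fin n) (Fin n) ℝ)
    (hgsmooth : ∀ i j, ContDiffOn ℝ ∞ (fun x => g x i j) U)
    (hgpos : ∀ x ∈ U, (g x).PosDef)
    (f : Vec n → ℝ) (hf : ContDiffOn ℝ ∞ f U)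
    (Flo : Fin n → Vec n × Vec n → ℝ)
    (hFlo : ∀ r, ∀ p : Vec n × Vec n, Flo r p =
      -(nrm g p.1 p.2) ^ 2 * fderiv ℝ f p.1 (Pi.single r 1)
        + 2 * (∑ s, fderiv ℝ f p.1 (Pi.single s 1) * p.2 s) * lower g p.1 p.2 r)
    (Fup : Fin n → Vec n × Vec n → ℝ)
    (hFup : ∀ k, ∀ p : Vec n × Vec n, Fup k p = ∑ r, (g p.1)⁻¹ k r * Flo r p)
    (gt : Vec n → Matrix (Fin n) (Fin n) ℝ)
    (hgt : ∀ x, gt x = Matrix.of fun i j => Real.exp (-2 * f x) * g x i j)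
    (x : ℝ → Vec n) (hx : ContDiff ℝ 2 x) (hxU : ∀ t, x t ∈ U) :
    (∀ t : ℝ, ∀ k : Fin n,
        deriv (fun s => deriv x s k) t
          + ∑ i, ∑ j, Christoffel g k i j (x t) * deriv x t i * deriv x t j
          = Fup k (x t, deriv x t))
      ↔
    (∀ t : ℝ, ∀ k : Fin n,
        deriv (fun s => deriv x s k) t
          + ∑ i, ∑ j, Christoffel gt k i j (x t) * deriv x t i * deriv x t j = 0) := by
  
  have key : ∀ t k, ∑ i, ∑ j, Christoffel gt k i j (x t) * deriv x t i * deriv x t j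
      = (∑ i, ∑ j, Christoffel g k i j (x t) * deriv x t i * deriv x t j)
        - Fup k (x t, deriv x t) := by
    intro t k
    rw [hFup]
    rw [key_identity hU hgsmooth hgpos hf hgt (hxU t) (deriv x t) k]
    congr 1
    apply Finset.sum_congr rfl
    intro r _
    rw [hFlo]
  constructor <;> intro h t k <;> have h1 := h t k <;> have h2 := key t k <;> linarith
end
end

section
/- Let L be a smooth Lagrangian on U × ℝⁿ whose velocity Hessian A_{ks}(x,v) = ∂²L/∂v^k∂v^s is nondegenerate at every point (a regular Lagrangian), and let B(x,v) denote the inverse matrix of A(x,v). Define the extended force field F^s(x,v) = Σ_k B^{sk}·(∇_k L − Σ_j (∇_j∇̃_k L)·v^j), where ∇_j∇̃_k L is the spatial gradient of the extended covector field ∇̃_k L. Then a C² curve t ↦ x(t) in U satisfies the Euler–Lagrange equations (d/dt)(∂L/∂v^k)(x(t),ẋ(t)) − (∂L/∂x^k)(x(t),ẋ(t)) = 0 if and only if it satisfies the Newtonian equations ∇_t v^s = F^s(x(t),ẋ(t)) with v(t) = ẋ(t). -/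
open Real Set
open scoped ContDiff

noncomputable section

lemma christoffel_symm {n : ℕ} {U : Set (Vec n)} (hU : IsOpen U)
    {g : Vec n → Matrix (Fin n) (Fin n) ℝ}
    (hgpos : ∀ x ∈ U, (g x).PosDef) {x : Vec n} (hx : x ∈ U) (k i j : Fin n) :
    Christoffel g k i j x = Christoffel g k j i x := by
  have hsym : ∀ a b : Fin n, fderiv ℝ (fun y => g y a b) x = fderiv ℝ (fun y => g y b a) x := by
    intro a b
    apply Filter.EventuallyEq.fderiv_eq
    filter_upwards [hU.mem_nhds hx] with y hy
    simpa using (hgpos y hy).1.apply b a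
  unfold Christoffel
  congr 1
  refine Finset.sum_congr rfl fun l _ => ?_
  rw [hsym i j]
  ring

lemma clm_decomp {n : ℕ} (φ : (Vec n × Vec n) →L[ℝ] ℝ) (w1 w2 : Vec n) :
    φ (w1, w2) = ∑ q, w1 q * φ (Pi.single q 1, 0) + ∑ b, w2 b * φ (0, Pi.single b 1) := by
  have hdec : (w1, w2) = (∑ q, w1 q • ((Pi.single q 1 : Vec n), (0 : Vec n)))
      + ∑ b, w2 b • ((0 : Vec n), (Pi.single b 1 : Vec n)) := by
    rw [Prod.ext_iff]
    constructor <;>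
    · simp only [Prod.fst_sum, Prod.snd_sum, Prod.smul_mk, Prod.fst_add, Prod.snd_add,
        smul_zero, Finset.sum_const_zero, add_zero, zero_add]
      funext i
      simp [Finset.sum_apply, Pi.single_apply, mul_ite]
  rw [hdec]
  simp only [map_add, map_sum]
  congr 1 <;> refine Finset.sum_congr rfl fun q _ => ?_ <;>
    rw [map_smul] <;> simp [smul_eq_mul]

lemma sum_comm3 {n : ℕ} (f : Fin n → Fin n → Fin n → ℝ) :
    ∑ s, ∑ i, ∑ j, f s i j = ∑ j, ∑ i, ∑ s, f s i j := by
  calc ∑ s, ∑ i, ∑ j, f s i j = ∑ i, ∑ s, ∑ j, f s i j := Finset.sum_comm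
    _ = ∑ i, ∑ j, ∑ s, f s i j := Finset.sum_congr rfl fun i _ => Finset.sum_comm
    _ = ∑ j, ∑ i, ∑ s, f s i j := Finset.sum_comm

/-- For a regular Lagrangian (velocity Hessian `A` everywhere nondegenerate,
with inverse `B`), with force field `F^s = Σ_k B^{sk}(∇_k L − Σ_j ∇_j ∇̃_k L · v^j)`, a C²
curve satisfies the Euler–Lagrange equations iff it satisfies the Newtonian equations
`∇_t v^s = F^s(x, ẋ)`. -/
theorem stmt_4 {n : ℕ} (U : Set (Vec n)) (hU : IsOpen U)
    (g : Vec n → Matrix (Fin n) (Fin n) ℝ)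
    (hgsmooth : ∀ i j, ContDiffOn ℝ ∞ (fun x => g x i j) U)
    (hgpos : ∀ x ∈ U, (g x).PosDef)
    (L : Vec n × Vec n → ℝ) (hL : ContDiffOn ℝ ∞ L (U ×ˢ (univ : Set (Vec n))))
    (A : Vec n × Vec n → Matrix (Fin n) (Fin n) ℝ)
    (hA : ∀ p, A p = Matrix.of fun k s => pdv (pdv L k) s p)
    (hreg : ∀ p ∈ U ×ˢ (univ : Set (Vec n)), IsUnit (A p).det)
    (B : Vec n × Vec n → Matrix (Fin n) (Fin n) ℝ) (hB : ∀ p, B p = (A p)⁻¹)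
    (F : Fin n → Vec n × Vec n → ℝ)
    (hF : ∀ s, ∀ p : Vec n × Vec n, F s p =
      ∑ k, B p s k *
        (sgrad g L k p - ∑ j, sgradCov g (fun i => pdv L i) j k p * p.2 j))
    (x : ℝ → Vec n) (hx : ContDiff ℝ 2 x) (hxU : ∀ t, x t ∈ U) :
    (∀ t : ℝ, ∀ k : Fin n,
        deriv (fun s => pdv L k (x s, deriv x s)) t - pdx L k (x t, deriv x t) = 0)
      ↔
    (∀ t : ℝ, ∀ s : Fin n,
        deriv (fun u => deriv x u s) t
            + ∑ i, ∑ j, Christoffel g s i j (x t) * deriv x t i * deriv x t j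
          = F s (x t, deriv x t)) := by
  have hopen : IsOpen (U ×ˢ (univ : Set (Vec n))) := hU.prod isOpen_univ
  have hxdiff : Differentiable ℝ x := hx.differentiable (by norm_num)
  have hx1 : ContDiff ℝ 1 (deriv x) := by
    have h2 : ContDiff ℝ ((1 : ℕ) + 1 : WithTop ℕ∞) x := by exact_mod_cast hx
    exact (contDiff_succ_iff_deriv.mp h2).2.2
  have hx'diff : Differentiable ℝ (deriv x) := hx1.differentiable one_ne_zero
  have hpdv : ∀ k, ContDiffOn ℝ ∞ (pdv L k) (U ×ˢ (univ : Set (Vec n))) := by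
    intro k
    have h1 : ContDiffOn ℝ ∞ (fderiv ℝ L) (U ×ˢ (univ : Set (Vec n))) :=
      hL.fderiv_of_isOpen hopen (by simp)
    exact h1.clm_apply contDiffOn_const
  -- chain rule
  have key : ∀ (t : ℝ) (k : Fin n),
      deriv (fun s => pdv L k (x s, deriv x s)) t
        = ∑ q, deriv x t q * pdx (pdv L k) q (x t, deriv x t)
          + ∑ b, deriv (fun u => deriv x u b) t * pdv (pdv L k) b (x t, deriv x t) := by
    intro t k
    have hp : (x t, deriv x t) ∈ U ×ˢ (univ : Set (Vec n)) := ⟨hxU t, mem_univ _⟩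
    have hfd : DifferentiableAt ℝ (pdv L k) (x t, deriv x t) :=
      (((hpdv k) _ hp).contDiffAt (hopen.mem_nhds hp)).differentiableAt (by simp)
    have hcurve : HasDerivAt (fun s => (x s, deriv x s)) (deriv x t, deriv (deriv x) t) t :=
      ((hxdiff t).hasDerivAt).prodMk ((hx'diff t).hasDerivAt)
    have hcomp := (hfd.hasFDerivAt).comp_hasDerivAt t hcurve
    simp only [Function.comp_def] at hcomp
    rw [hcomp.deriv]
    have hb : ∀ b, deriv (fun u => deriv x u b) t = deriv (deriv x) t b := fun b =>
      (hasDerivAt_pi.mp (hx'diff t).hasDerivAt b).deriv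
    simp_rw [hb]
    exact clm_decomp _ _ _
  -- pointwise bridge identity
  have main : ∀ (t : ℝ) (k : Fin n),
      deriv (fun s => pdv L k (x s, deriv x s)) t - pdx L k (x t, deriv x t)
        = ∑ s, A (x t, deriv x t) k s *
            (deriv (fun u => deriv x u s) t
              + ∑ i, ∑ j, Christoffel g s i j (x t) * deriv x t i * deriv x t j
              - F s (x t, deriv x t)) := by
    intro t k
    have hp : (x t, deriv x t) ∈ U ×ˢ (univ : Set (Vec n)) := ⟨hxU t, mem_univ _⟩
    have hABone : A (x t, deriv x t) * B (x t, deriv x t) = 1 := by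
      rw [hB]; exact Matrix.mul_nonsing_inv _ (hreg _ hp)
    have hAC : ∀ C : Fin n → ℝ,
        ∑ s, A (x t, deriv x t) k s * ∑ m, B (x t, deriv x t) s m * C m = C k := by
      intro C
      have h1 : ∑ s, A (x t, deriv x t) k s * ∑ m, B (x t, deriv x t) s m * C m
          = ∑ m, (∑ s, A (x t, deriv x t) k s * B (x t, deriv x t) s m) * C m := by
        simp_rw [Finset.mul_sum, Finset.sum_mul]
        rw [Finset.sum_comm]
        simp_rw [mul_assoc]
      rw [h1]
      have h2 : ∀ m, ∑ s, A (x t, deriv x t) k s * B (x t, deriv x t) s m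
          = (A (x t, deriv x t) * B (x t, deriv x t)) k m := fun m => (Matrix.mul_apply).symm
      simp_rw [h2, hABone, Matrix.one_apply, ite_mul, one_mul, zero_mul]
      simp
    have hApdv : ∀ b, pdv (pdv L k) b (x t, deriv x t) = A (x t, deriv x t) k b := by
      intro b; rw [hA]; rfl
    have hAF : ∑ s, A (x t, deriv x t) k s * F s (x t, deriv x t)
        = sgrad g L k (x t, deriv x t)
          - ∑ j, sgradCov g (fun i => pdv L i) j k (x t, deriv x t) * deriv x t j := by
      simp_rw [hF]
      exact hAC _
    have csymm : ∀ (b i j : Fin n),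
        Christoffel g b i j (x t) = Christoffel g b j i (x t) :=
      fun b i j => christoffel_symm hU hgpos (hxU t) b i j
    rw [key t k]
    simp_rw [mul_sub, mul_add, Finset.sum_sub_distrib, Finset.sum_add_distrib, hAF,
      sgrad, sgradCov, hApdv]
    have e1 : ∑ s, A (x t, deriv x t) k s *
          (∑ i, ∑ j, Christoffel g s i j (x t) * deriv x t i * deriv x t j)
        = ∑ j, (∑ a, ∑ b, deriv x t a * Christoffel g b j a (x t) * A (x t, deriv x t) k b)
            * deriv x t j := by
      simp_rw [Finset.mul_sum, Finset.sum_mul]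
      rw [sum_comm3]
      refine Finset.sum_congr rfl fun j _ => Finset.sum_congr rfl fun i _ =>
        Finset.sum_congr rfl fun s _ => ?_
      rw [csymm s i j]
      ring
    have e2 : ∑ a, ∑ b, deriv x t a * Christoffel g b k a (x t) * pdv L b (x t, deriv x t)
        = ∑ j, (∑ b, Christoffel g b j k (x t) * pdv L b (x t, deriv x t)) * deriv x t j := by
      simp_rw [Finset.sum_mul]
      refine Finset.sum_congr rfl fun j _ => Finset.sum_congr rfl fun b _ => ?_
      rw [csymm b k j]
      ring
    have e3 : ∑ b, deriv (fun u => deriv x u b) t * A (x t, deriv x t) k b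
        = ∑ s, A (x t, deriv x t) k s * deriv (fun u => deriv x u s) t :=
      Finset.sum_congr rfl fun b _ => mul_comm _ _
    have e4 : ∑ q, deriv x t q * pdx (pdv L k) q (x t, deriv x t)
        = ∑ j, pdx (pdv L k) j (x t, deriv x t) * deriv x t j :=
      Finset.sum_congr rfl fun q _ => mul_comm _ _
    simp_rw [sub_mul, Finset.sum_sub_distrib]
    linear_combination e3 + e4 - e1 - e2
  constructor
  · intro hEL t s
    have hp : (x t, deriv x t) ∈ U ×ˢ (univ : Set (Vec n)) := ⟨hxU t, mem_univ _⟩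
    set N : Fin n → ℝ := fun s => deriv (fun u => deriv x u s) t
        + ∑ i, ∑ j, Christoffel g s i j (x t) * deriv x t i * deriv x t j
        - F s (x t, deriv x t) with hNdef
    have hmv : (A (x t, deriv x t)).mulVec N = 0 := by
      funext k
      have := (main t k).symm.trans (hEL t k)
      simpa [Matrix.mulVec, dotProduct, hNdef] using this
    have hN0 : N = 0 := by
      have h2 := congrArg (fun w => ((A (x t, deriv x t))⁻¹).mulVec w) hmv
      simpa [Matrix.mulVec_mulVec, Matrix.nonsing_inv_mul _ (hreg _ hp),
        Matrix.one_mulVec, Matrix.mulVec_zero] using h2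
    have := congrFun hN0 s
    simp only [hNdef, Pi.zero_apply] at this
    linarith [this]
  · intro hNew t k
    rw [main t k]
    refine Finset.sum_eq_zero fun s _ => ?_
    rw [sub_eq_zero.mpr (hNew t s), mul_zero]
end
end

section
/- Let L(x,v) be a smooth Lagrangian on U × ℝⁿ whose Legendre map λ(x,v) = (x, ∂L/∂v(x,v)) is a bijection of U × ℝⁿ onto U × ℝⁿ with smooth inverse, and let H be the Hamilton function. Then for every (x,v) ∈ U × ℝⁿ, with p = ∂L/∂v(x,v), the spatial gradients satisfy ∇_q H(x,p) = −∇_q L(x,v) for all q, where ∇_q L = ∂L/∂x^q − Σ_{a,b} v^a Γ^b_{qa}(x) ∂L/∂v^b and ∇_q H = ∂H/∂x^q + Σ_{a,b} p_a Γ^a_{qb}(x) ∂H/∂p_b. In coordinate-free form, ∇H = −(∇L) ∘ λ⁻¹. -/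
open Real Set
open scoped ContDiff

noncomputable section

/-- The spatial gradients of the Hamilton function and of the Lagrange
function satisfy `∇_q H(x,p) = −∇_q L(x,v)` for `p = ∂L/∂v(x,v)`, where
`∇_q L = ∂L/∂x^q − Σ v^a Γ^b_{qa} ∂L/∂v^b` and `∇_q H = ∂H/∂x^q + Σ p_a Γ^a_{qb} ∂H/∂p_b`. -/
theorem stmt_8 {n : ℕ} (U : Set (Vec n)) (hU : IsOpen U)
    (g : Vec n → Matrix (Fin n) (Fin n) ℝ)
    (hgsmooth : ∀ i j, ContDiffOn ℝ ∞ (fun x => g x i j) U)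
    (hgpos : ∀ x ∈ U, (g x).PosDef)
    (L : Vec n × Vec n → ℝ) (hL : ContDiffOn ℝ ∞ L (U ×ˢ (univ : Set (Vec n))))
    (lam : Vec n × Vec n → Vec n × Vec n)
    (hlam : ∀ p : Vec n × Vec n, lam p = (p.1, fun k => pdv L k p))
    (hbij : Set.BijOn lam (U ×ˢ (univ : Set (Vec n))) (U ×ˢ (univ : Set (Vec n))))
    (mu : Vec n × Vec n → Vec n × Vec n)
    (hmu : ContDiffOn ℝ ∞ mu (U ×ˢ (univ : Set (Vec n))))
    (hmu1 : ∀ p ∈ U ×ˢ (univ : Set (Vec n)), mu (lam p) = p)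
    (hmu2 : ∀ p ∈ U ×ˢ (univ : Set (Vec n)), lam (mu p) = p)
    (H : Vec n × Vec n → ℝ)
    (hH : ∀ p : Vec n × Vec n, H p = (∑ k, (mu p).2 k * pdv L k (mu p)) - L (mu p))
    :
    ∀ x ∈ U, ∀ v : Vec n, ∀ q : Fin n,
      pdx H q (x, fun k => pdv L k (x, v))
          + ∑ a, ∑ b, (pdv L a (x, v)) * Christoffel g a q b x *
              pdv H b (x, fun k => pdv L k (x, v))
        = -(pdx L q (x, v)
            - ∑ a, ∑ b, v a * Christoffel g b q a x * pdv L b (x, v)) := by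
  intro x hx v q
  have hxv : ((x, v) : Vec n × Vec n) ∈ U ×ˢ (univ : Set (Vec n)) := ⟨hx, trivial⟩
  set p : Vec n := fun k => pdv L k (x, v) with hp
  have hlamxv : lam (x, v) = (x, p) := by rw [hlam]
  have hyp : ((x, p) : Vec n × Vec n) ∈ U ×ˢ (univ : Set (Vec n)) := by
    have := hbij.mapsTo hxv; rwa [hlamxv] at this
  have hmuyp : mu (x, p) = (x, v) := by rw [← hlamxv, hmu1 _ hxv]
  have hopen : IsOpen (U ×ˢ (univ : Set (Vec n))) := hU.prod isOpen_univ
  set m : Vec n × Vec n → Vec n := fun y => (mu y).2 with hm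
  have hmyp : m (x, p) = v := by rw [hm]; simp [hmuyp]
  -- H agrees with the explicit Legendre formula on the open set
  have hHF : ∀ y ∈ U ×ˢ (univ : Set (Vec n)),
      H y = (∑ k, m y k * y.2 k) - L (y.1, m y) := by
    intro y hy
    have h1 : lam (mu y) = y := hmu2 y hy
    rw [hlam] at h1
    have h2 : (mu y).1 = y.1 := by have t := congrArg Prod.fst h1; exact t
    have h3 : ∀ k, pdv L k (mu y) = y.2 k := by
      intro k; have t := congrFun (congrArg Prod.snd h1) k; exact t
    have h4 : mu y = (y.1, m y) := Prod.ext h2 rfl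
    rw [hH]
    simp only [h3, ← h4, hm]
    exact congrArg (fun t => (∑ k, (mu y).2 k * y.2 k) - L t) (Prod.ext h2 rfl)
  -- differentiability
  have hone : (1:WithTop ℕ∞) ≤ ∞ := by exact_mod_cast le_top
  have hLd : DifferentiableAt ℝ L (x, v) :=
    (hL.contDiffAt (hopen.mem_nhds hxv)).differentiableAt (by simp)
  have hmud : DifferentiableAt ℝ mu (x, p) :=
    (hmu.contDiffAt (hopen.mem_nhds hyp)).differentiableAt (by simp)
  set DL : (Vec n × Vec n) →L[ℝ] ℝ := fderiv ℝ L (x, v) with hDL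
  set Dm : (Vec n × Vec n) →L[ℝ] Vec n :=
    (ContinuousLinearMap.snd ℝ (Vec n) (Vec n)).comp (fderiv ℝ mu (x, p)) with hDm
  have hm' : HasFDerivAt m Dm (x, p) := hmud.hasFDerivAt.snd
  have hL' : HasFDerivAt L DL (x, v) := hLd.hasFDerivAt
  -- derivative of the composed term y ↦ L (y.1, m y)
  have hG : HasFDerivAt (fun y : Vec n × Vec n => ((y.1, m y) : Vec n × Vec n))
      ((ContinuousLinearMap.fst ℝ (Vec n) (Vec n)).prod Dm) (x, p) :=
    HasFDerivAt.prodMk (hasFDerivAt_fst) hm'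
  have hLG : HasFDerivAt (fun y : Vec n × Vec n => L (y.1, m y))
      (DL.comp ((ContinuousLinearMap.fst ℝ (Vec n) (Vec n)).prod Dm)) (x, p) := by
    have : HasFDerivAt L DL ((x, p).1, m (x, p)) := by rw [hmyp]; exact hL'
    exact this.comp (x, p) hG
  -- derivative of the sum term
  have hS : HasFDerivAt (fun y : Vec n × Vec n => ∑ k, m y k * y.2 k)
      (∑ k, (m (x, p) k • ((ContinuousLinearMap.proj k).comp
          (ContinuousLinearMap.snd ℝ (Vec n) (Vec n)))
        + (x, p).2 k • ((ContinuousLinearMap.proj k).comp Dm))) (x, p) := by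
    apply HasFDerivAt.fun_sum
    intro k _
    have h1 : HasFDerivAt (fun y : Vec n × Vec n => m y k)
        ((ContinuousLinearMap.proj k).comp Dm) (x, p) :=
      ((ContinuousLinearMap.proj k : Vec n →L[ℝ] ℝ).hasFDerivAt).comp (x, p) hm'
    have h2 : HasFDerivAt (fun y : Vec n × Vec n => y.2 k)
        ((ContinuousLinearMap.proj k).comp (ContinuousLinearMap.snd ℝ (Vec n) (Vec n)))
        (x, p) :=
      ((ContinuousLinearMap.proj k : Vec n →L[ℝ] ℝ).comp
        (ContinuousLinearMap.snd ℝ (Vec n) (Vec n))).hasFDerivAt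
    exact h1.mul h2
  set DF : (Vec n × Vec n) →L[ℝ] ℝ :=
    (∑ k, (m (x, p) k • ((ContinuousLinearMap.proj k).comp
          (ContinuousLinearMap.snd ℝ (Vec n) (Vec n)))
        + (x, p).2 k • ((ContinuousLinearMap.proj k).comp Dm)))
      - DL.comp ((ContinuousLinearMap.fst ℝ (Vec n) (Vec n)).prod Dm) with hDF
  have hF : HasFDerivAt (fun y : Vec n × Vec n => (∑ k, m y k * y.2 k) - L (y.1, m y))
      DF (x, p) := hS.sub hLG
  -- fderiv of H equals DF
  have hHeq : fderiv ℝ H (x, p) = DF := by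
    have hev : H =ᶠ[nhds (x, p)]
        (fun y : Vec n × Vec n => (∑ k, m y k * y.2 k) - L (y.1, m y)) :=
      Filter.eventuallyEq_of_mem (hopen.mem_nhds hyp) hHF
    rw [hev.fderiv_eq, hF.fderiv]
  -- decomposition lemma: DL (0, z) = ∑ k, z k * p k
  have hDL0 : ∀ z : Vec n, DL (0, z) = ∑ k, z k * p k := by
    intro z
    have hz : ((0, z) : Vec n × Vec n)
        = ∑ k, z k • (((0 : Vec n), (Pi.single k 1 : Vec n)) : Vec n × Vec n) := by
      rw [Prod.ext_iff]
      refine ⟨?_, ?_⟩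
      · rw [Prod.fst_sum]; simp
      · rw [Prod.snd_sum]
        funext j
        simp [Pi.single_apply, Finset.sum_ite_eq', mul_comm]
    rw [hz, map_sum]
    refine Finset.sum_congr rfl fun k _ => ?_
    rw [map_smul]
    simp only [smul_eq_mul]
    congr 1
  -- evaluate DF on a general vector
  have hDFval : ∀ w : Vec n × Vec n, DF w = (∑ k, v k * w.2 k) - DL (w.1, 0) := by
    intro w
    have hsplit : ((w.1, Dm w) : Vec n × Vec n) = (w.1, 0) + (0, Dm w) := by
      simp [Prod.ext_iff]
    rw [hDF]
    simp only [ContinuousLinearMap.sub_apply, ContinuousLinearMap.sum_apply,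
      ContinuousLinearMap.add_apply, ContinuousLinearMap.smul_apply,
      ContinuousLinearMap.comp_apply, ContinuousLinearMap.prod_apply,
      ContinuousLinearMap.coe_fst', ContinuousLinearMap.coe_snd',
      ContinuousLinearMap.proj_apply, smul_eq_mul, hmyp]
    rw [hsplit, map_add, hDL0]
    have : ∀ k, p k * Dm w k = Dm w k * p k := fun k => mul_comm _ _
    simp only [this]
    ring_nf
    rw [Finset.sum_add_distrib]
    ring
  -- the two key derivative identities
  have hpdxH : pdx H q (x, p) = -(pdx L q (x, v)) := by
    show fderiv ℝ H (x, p) (Pi.single q 1, 0) = -(pdx L q (x, v))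
    rw [hHeq, hDFval]
    simp [pdx, hDL]
  have hpdvH : ∀ b, pdv H b (x, p) = v b := by
    intro b
    show fderiv ℝ H (x, p) (0, Pi.single b 1) = v b
    rw [hHeq, hDFval]
    have : DL (((0 : Vec n), (0 : Vec n)) : Vec n × Vec n) = 0 := by
      have : (((0 : Vec n), (0 : Vec n)) : Vec n × Vec n) = 0 := rfl
      rw [this, map_zero]
    rw [this]
    simp [Pi.single_apply, Finset.sum_ite_eq']
  -- finish by algebra
  simp only [hpdxH, hpdvH]
  have hsum : (∑ a, ∑ b, pdv L a (x, v) * Christoffel g a q b x * v b)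
      = ∑ a, ∑ b, v a * Christoffel g b q a x * pdv L b (x, v) := by
    rw [Finset.sum_comm]
    exact Finset.sum_congr rfl fun a _ => Finset.sum_congr rfl fun b _ => by ring
  rw [hsum]
  ring
end
end

section
/- Let β : (0,∞) × (0,∞) → ℝ be a C² function with ∂β/∂u(u,v) ≠ 0 and ∂β/∂v(u,v) ≠ 0 at every point, satisfying (∂²β/∂v∂u)/(∂β/∂u) = 1/v + (∂²β/∂v²)/(∂β/∂v) at every point (u,v). Then there exists a function c : (0,∞) → ℝ such that ∂β/∂u(u,v) = c(u)·v·∂β/∂v(u,v) for all u, v > 0. -/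
open Real Set
open scoped ContDiff

noncomputable section

/-- If a `C²` function `β(u,v)` on `(0,∞) × (0,∞)` with nonvanishing
first partials satisfies `β''_{uv}/β'_u = 1/v + β''_{vv}/β'_v`, then
`β'_u(u,v) = c(u)·v·β'_v(u,v)` for some function `c`. -/
theorem stmt_15 (β : ℝ × ℝ → ℝ)
    (hβ : ContDiffOn ℝ 2 β (Set.Ioi (0:ℝ) ×ˢ Set.Ioi (0:ℝ)))
    (hu : ∀ u v : ℝ, 0 < u → 0 < v → fderiv ℝ β (u, v) (1, 0) ≠ 0)
    (hv : ∀ u v : ℝ, 0 < u → 0 < v → fderiv ℝ β (u, v) (0, 1) ≠ 0)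
    (hpde : ∀ u v : ℝ, 0 < u → 0 < v →
      fderiv ℝ (fun p => fderiv ℝ β p (1, 0)) (u, v) (0, 1) / fderiv ℝ β (u, v) (1, 0)
        = 1 / v +
          fderiv ℝ (fun p => fderiv ℝ β p (0, 1)) (u, v) (0, 1) / fderiv ℝ β (u, v) (0, 1)) :
    ∃ c : ℝ → ℝ, ∀ u v : ℝ, 0 < u → 0 < v →
      fderiv ℝ β (u, v) (1, 0) = c u * v * fderiv ℝ β (u, v) (0, 1) := by
  set S : Set (ℝ × ℝ) := Set.Ioi (0:ℝ) ×ˢ Set.Ioi (0:ℝ) with hS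
  have hSopen : IsOpen S := isOpen_Ioi.prod isOpen_Ioi
  have hβ1 : ContDiffOn ℝ 1 (fderiv ℝ β) S := hβ.fderiv_of_isOpen hSopen (by norm_num)
  -- differentiability of the partial-derivative functions on S
  have hBdiff : ∀ w : ℝ × ℝ, DifferentiableOn ℝ (fun p => fderiv ℝ β p w) S := by
    intro w
    have : DifferentiableOn ℝ (fderiv ℝ β) S := hβ1.differentiableOn one_ne_zero
    exact ((ContinuousLinearMap.apply ℝ ℝ w).differentiable.comp_differentiableOn this)
  have hBat : ∀ w : ℝ × ℝ, ∀ p ∈ S, DifferentiableAt ℝ (fun q => fderiv ℝ β q w) p := by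
    intro w p hp
    exact (hBdiff w).differentiableAt (hSopen.mem_nhds hp)
  -- the curve v ↦ (u, v)
  have hcurve : ∀ u v : ℝ, HasDerivAt (fun t : ℝ => ((u : ℝ), t)) ((0:ℝ), (1:ℝ)) v := by
    intro u v
    exact HasDerivAt.prodMk (hasDerivAt_const v u) (hasDerivAt_id v)
  -- derivative of partials along v
  have hDeriv : ∀ w : ℝ × ℝ, ∀ u v : ℝ, 0 < u → 0 < v →
      HasDerivAt (fun t => fderiv ℝ β (u, t) w)
        (fderiv ℝ (fun p => fderiv ℝ β p w) (u, v) (0, 1)) v := by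
    intro w u v hu0 hv0
    have hp : ((u, v) : ℝ × ℝ) ∈ S := ⟨hu0, hv0⟩
    exact ((hBat w (u, v) hp).hasFDerivAt).comp_hasDerivAt v (hcurve u v)
  -- the quotient function is constant in v
  refine ⟨fun u => fderiv ℝ β (u, 1) (1, 0) / fderiv ℝ β (u, 1) (0, 1), ?_⟩
  intro u v hu0 hv0
  set f : ℝ → ℝ := fun t => fderiv ℝ β (u, t) (1, 0) / (t * fderiv ℝ β (u, t) (0, 1)) with hf
  have key : f v = f 1 := by
    have hconv : Convex ℝ (Set.Ioi (0:ℝ)) := convex_Ioi 0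
    have hderiv0 : ∀ t ∈ Set.Ioi (0:ℝ), HasDerivAt f 0 t := by
      intro t ht
      have ht0 : (0:ℝ) < t := ht
      set F := fderiv ℝ β (u, t) (1, 0) with hF
      set G := fderiv ℝ β (u, t) (0, 1) with hG
      set F' := fderiv ℝ (fun p => fderiv ℝ β p (1, 0)) (u, t) (0, 1) with hF'
      set G' := fderiv ℝ (fun p => fderiv ℝ β p (0, 1)) (u, t) (0, 1) with hG'
      have hFne : F ≠ 0 := hu u t hu0 ht0
      have hGne : G ≠ 0 := hv u t hu0 ht0
      have htne : t ≠ 0 := ne_of_gt ht0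
      have h1 : HasDerivAt (fun s => fderiv ℝ β (u, s) (1, 0)) F' t :=
        hDeriv (1, 0) u t hu0 ht0
      have h2 : HasDerivAt (fun s => fderiv ℝ β (u, s) (0, 1)) G' t :=
        hDeriv (0, 1) u t hu0 ht0
      have h3 : HasDerivAt (fun s => s * fderiv ℝ β (u, s) (0, 1)) (1 * G + t * G') t :=
        (hasDerivAt_id t).mul h2
      have hden : t * G ≠ 0 := mul_ne_zero htne hGne
      have h4 : HasDerivAt f ((F' * (t * G) - F * (1 * G + t * G')) / (t * G) ^ 2) t :=
        h1.div h3 hden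
      have hzero : (F' * (t * G) - F * (1 * G + t * G')) / (t * G) ^ 2 = 0 := by
        have hp := hpde u t hu0 ht0
        rw [← hF, ← hG, ← hF', ← hG'] at hp
        field_simp at hp
        have : F' * (t * G) - F * (1 * G + t * G') = 0 := by nlinarith [hp]
        rw [this, zero_div]
      rwa [hzero] at h4
    have hdiff : DifferentiableOn ℝ f (Set.Ioi (0:ℝ)) := fun t ht =>
      (hderiv0 t ht).differentiableAt.differentiableWithinAt
    have hfd : ∀ t ∈ Set.Ioi (0:ℝ), fderivWithin ℝ f (Set.Ioi (0:ℝ)) t = 0 := by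
      intro t ht
      have := (hderiv0 t ht).hasFDerivAt.fderiv
      rw [fderivWithin_of_isOpen isOpen_Ioi ht, this]
      exact ContinuousLinearMap.ext fun s => by simp
    exact hconv.is_const_of_fderivWithin_eq_zero hdiff hfd hv0 (by norm_num)
  have hGv : fderiv ℝ β (u, v) (0, 1) ≠ 0 := hv u v hu0 hv0
  have hG1 : fderiv ℝ β (u, 1) (0, 1) ≠ 0 := hv u 1 hu0 one_pos
  have hvne : v ≠ 0 := ne_of_gt hv0
  simp only [hf, one_mul] at key
  field_simp at key
  field_simp
  linarith [key]
end
end
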